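/- arXiv:1501.05755 — 12 statements merged into one kernel-verified Lean document; each statement's English description precedes it below -/
import Mathlib

section
/- Let f : ℕ → ℕ be a function such that f(n) ≠ n for all n. Then there exists a 3-coloring χ : ℕ → {1,2,3} such that χ(n) ≠ χ(f(n)) for all n. -/
open Filter

private lemma exists_third (a b : Fin 3) : ∃ c : Fin 3, c ≠ a ∧ c ≠ b := by
  fin_cases a <;> fin_cases b <;> decide

private lemma finColor (f : ℕ → ℕ) (hf : ∀ n, f n ≠ n) :
    ∀ S : Finset ℕ, ∃ χ : ℕ → Fin 3, ∀ n ∈ S, f n ∈ S → χ n ≠ χ (f n) := by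
  intro S
  induction S using Finset.strongInduction with
  | _ S ih =>
    rcases S.eq_empty_or_nonempty with rfl | hne
    · exact ⟨fun _ => 0, by simp⟩
    have hlow : ∃ v ∈ S, (S.filter (fun m => f m = v)).card ≤ 1 := by
      by_contra h
      push_neg at h
      have hdisj : ∀ v₁ ∈ S, ∀ v₂ ∈ S, v₁ ≠ v₂ →
          Disjoint (S.filter (fun m => f m = v₁)) (S.filter (fun m => f m = v₂)) := by
        intro v₁ _ v₂ _ hne12
        apply Finset.disjoint_left.mpr
        intro m hm1 hm2
        simp only [Finset.mem_filter] at hm1 hm2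
        exact hne12 (hm1.2 ▸ hm2.2 ▸ rfl)
      have hsum : ∑ v ∈ S, (S.filter (fun m => f m = v)).card
          = (S.biUnion (fun v => S.filter (fun m => f m = v))).card :=
        (Finset.card_biUnion hdisj).symm
      have hle : (S.biUnion (fun v => S.filter (fun m => f m = v))).card ≤ S.card := by
        apply Finset.card_le_card
        intro m hm
        simp only [Finset.mem_biUnion, Finset.mem_filter] at hm
        exact hm.choose_spec.2.1
      have hge : 2 * S.card ≤ ∑ v ∈ S, (S.filter (fun m => f m = v)).card := by
        calc 2 * S.card = ∑ _v ∈ S, 2 := by rw [Finset.sum_const, smul_eq_mul, mul_comm]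
        _ ≤ _ := Finset.sum_le_sum fun v hv => h v hv
      have : 2 * S.card ≤ S.card := le_trans hge (hsum ▸ hle)
      have hpos : 0 < S.card := Finset.card_pos.mpr hne
      omega
    obtain ⟨v, hvS, hvcard⟩ := hlow
    obtain ⟨χ', hχ'⟩ := ih (S.erase v) (Finset.erase_ssubset hvS)
    obtain ⟨c, hc1, hc2⟩ : ∃ c : Fin 3, c ≠ χ' (f v) ∧ ∀ m ∈ S, f m = v → c ≠ χ' m := by
      by_cases hT : (S.filter (fun m => f m = v)).Nonempty
      · obtain ⟨m0, hm0⟩ := hT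
        obtain ⟨c, hca, hcb⟩ := exists_third (χ' (f v)) (χ' m0)
        refine ⟨c, hca, fun m hmS hfm => ?_⟩
        have hm : m ∈ S.filter (fun m => f m = v) := Finset.mem_filter.mpr ⟨hmS, hfm⟩
        have : m = m0 := Finset.card_le_one.mp hvcard m hm m0 hm0
        exact this ▸ hcb
      · obtain ⟨c, hca, _⟩ := exists_third (χ' (f v)) (χ' (f v))
        refine ⟨c, hca, fun m hmS hfm => absurd ⟨m, Finset.mem_filter.mpr ⟨hmS, hfm⟩⟩ hT⟩
    refine ⟨Function.update χ' v c, fun n hnS hfnS => ?_⟩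
    by_cases hnv : n = v
    · subst hnv
      rw [Function.update_self, Function.update_of_ne (hf n)]
      exact hc1
    · rw [Function.update_of_ne hnv]
      by_cases hfnv : f n = v
      · rw [hfnv, Function.update_self]
        exact fun h => hc2 n hnS hfnv h.symm
      · rw [Function.update_of_ne hfnv]
        exact hχ' n (Finset.mem_erase.mpr ⟨hnv, hnS⟩) (Finset.mem_erase.mpr ⟨hfnv, hfnS⟩)

theorem stmt_0 (f : ℕ → ℕ) (hf : ∀ n, f n ≠ n) :
    ∃ χ : ℕ → Fin 3, ∀ n, χ n ≠ χ (f n) := by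
  choose χN hχN using fun N => finColor f hf (Finset.range N)
  set U := hyperfilter ℕ with hU
  have hcol : ∀ n, ∃ c : Fin 3, {N | χN N n = c} ∈ U := by
    intro n
    by_contra h
    push_neg at h
    have h1 : ∀ c : Fin 3, {N | χN N n = c}ᶜ ∈ U := fun c =>
      Ultrafilter.compl_mem_iff_notMem.mpr (h c)
    have h2 : (⋂ c : Fin 3, {N | χN N n = c}ᶜ) ∈ U := by
      exact Filter.iInter_mem.mpr h1
    have h3 : (⋂ c : Fin 3, {N | χN N n = c}ᶜ) = ∅ := by
      ext N
      simp only [Set.mem_iInter, Set.mem_compl_iff, Set.mem_setOf_eq, Set.mem_empty_iff_false,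
        iff_false, not_forall, not_not]
      exact ⟨χN N n, rfl⟩
    rw [h3] at h2
    exact (Filter.empty_notMem (U : Filter ℕ)) h2
  choose χ hχ using hcol
  refine ⟨χ, fun n => ?_⟩
  have hA := hχ n
  have hB := hχ (f n)
  have hC : {N | max n (f n) < N} ∈ U := by
    apply Nat.hyperfilter_le_atTop
    exact Filter.mem_atTop_sets.mpr ⟨max n (f n) + 1, fun N hN => by simp only [Set.mem_setOf_eq]; omega⟩
  obtain ⟨N, hN1, hN2, hN3⟩ := Filter.nonempty_of_mem (Filter.inter_mem hA (Filter.inter_mem hB hC))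
  have hnN : n ∈ Finset.range N := Finset.mem_range.mpr (lt_of_le_of_lt (le_max_left _ _) hN3)
  have hfnN : f n ∈ Finset.range N := Finset.mem_range.mpr (lt_of_le_of_lt (le_max_right _ _) hN3)
  have := hχN N n hnN hfnN
  rw [hN1, hN2] at this
  exact this
end

section
/- For every finite set F ⊂ ℕ and every function f : ℕ → ℕ with f(n) ≠ n for all n, there exists χ : F → {1,2,3} such that χ(x) ≠ χ(f(x)) whenever both x ∈ F and f(x) ∈ F. -/
theorem stmt_1 (F : Finset ℕ) (f : ℕ → ℕ) (hf : ∀ n, f n ≠ n) :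
    ∃ χ : {x // x ∈ F} → Fin 3,
      ∀ (x : ℕ) (hx : x ∈ F) (hfx : f x ∈ F), χ ⟨x, hx⟩ ≠ χ ⟨f x, hfx⟩ := by
  suffices h : ∃ χ : ℕ → Fin 3, ∀ x ∈ F, f x ∈ F → χ x ≠ χ (f x) by
    obtain ⟨χ, hχ⟩ := h
    exact ⟨fun p => χ p.1, fun x hx hfx => hχ x hx hfx⟩
  induction F using Finset.strongInduction with
  | _ F ih =>
    rcases F.eq_empty_or_nonempty with rfl | hne
    · exact ⟨fun _ => 0, fun x hx => absurd hx (by simp)⟩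
    -- find a vertex of in-degree ≤ 1
    have hx : ∃ x ∈ F, (F.filter fun y => f y = x).card ≤ 1 := by
      by_contra h
      push_neg at h
      have h1 : (F.filter fun y => f y ∈ F).card
          = ∑ b ∈ F, ((F.filter fun y => f y ∈ F).filter fun y => f y = b).card :=
        Finset.card_eq_sum_card_fiberwise (fun y hy => (Finset.mem_filter.mp hy).2)
      have h2 : ∀ b ∈ F, ((F.filter fun y => f y ∈ F).filter fun y => f y = b).card
          = (F.filter fun y => f y = b).card := by
        intro b hb
        congr 1
        ext y
        simp only [Finset.mem_filter]
        constructor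
        · rintro ⟨⟨hy, _⟩, h⟩; exact ⟨hy, h⟩
        · rintro ⟨hy, h⟩; exact ⟨⟨hy, h ▸ hb⟩, h⟩
      have h3 : 2 * F.card ≤ (F.filter fun y => f y ∈ F).card := by
        rw [h1]
        calc 2 * F.card = ∑ _b ∈ F, 2 := by rw [Finset.sum_const]; ring
          _ ≤ _ := Finset.sum_le_sum fun b hb => by rw [h2 b hb]; exact h b hb
      have h4 : (F.filter fun y => f y ∈ F).card ≤ F.card := Finset.card_filter_le _ _
      have := hne.card_pos
      omega
    obtain ⟨x, hxF, hdeg⟩ := hx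
    obtain ⟨χ, hχ⟩ := ih (F.erase x) (F.erase_ssubset hxF)
    set B : Finset (Fin 3) :=
      insert (χ (f x)) (((F.erase x).filter fun y => f y = x).image χ) with hB
    have hBcard : B.card ≤ 2 := by
      apply le_trans (Finset.card_insert_le _ _)
      have : (((F.erase x).filter fun y => f y = x).image χ).card ≤ 1 := by
        apply le_trans Finset.card_image_le
        refine le_trans (Finset.card_le_card ?_) hdeg
        intro y hy
        simp only [Finset.mem_filter, Finset.mem_erase] at hy ⊢
        exact ⟨hy.1.2, hy.2⟩
      omega
    have hcex : ∃ c : Fin 3, c ∉ B := by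
      by_contra h
      push_neg at h
      have hsub : (Finset.univ : Finset (Fin 3)) ⊆ B := fun c _ => h c
      have := Finset.card_le_card hsub
      simp at this
      omega
    obtain ⟨c, hc⟩ := hcex
    refine ⟨Function.update χ x c, fun a ha hfa => ?_⟩
    rcases eq_or_ne a x with rfl | hax
    · rw [Function.update_self, Function.update_of_ne (hf a)]
      intro h
      exact hc (h ▸ Finset.mem_insert_self _ _)
    · rw [Function.update_of_ne hax]
      rcases eq_or_ne (f a) x with hfax | hfax
      · rw [hfax, Function.update_self]
        intro h
        apply hc
        rw [← h]
        exact Finset.mem_insert_of_mem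
          (Finset.mem_image_of_mem χ
            (Finset.mem_filter.mpr ⟨Finset.mem_erase.mpr ⟨hax, ha⟩, hfax⟩))
      · rw [Function.update_of_ne hfax]
        exact hχ a (Finset.mem_erase.mpr ⟨hax, ha⟩) (Finset.mem_erase.mpr ⟨hfax, hfa⟩)
end

section
/- Let f : ℕ → ℕ and let U be an ultrafilter on ℕ. If the pushforward f(U) equals U, then the set {n | f(n) = n} belongs to U. -/
open Finset

/-- Any finite piece of a functional graph is 3-colorable. -/
lemma finite_three_color (f : ℕ → ℕ) (E : Finset ℕ) (hE : ∀ n ∈ E, f n ≠ n) :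
    ∃ c : ℕ → Fin 3, ∀ n ∈ E, c (f n) ≠ c n := by
  induction E using Finset.strongInduction with
  | _ E ih =>
  rcases E.eq_empty_or_nonempty with rfl | hne
  · exact ⟨fun _ => 0, by simp⟩
  -- vertex set
  set V : Finset ℕ := E ∪ E.image f with hV
  have hEV : E ⊆ V := subset_union_left
  -- degree
  set deg : ℕ → ℕ := fun v => (E.filter (fun n => f n = v)).card + (if v ∈ E then 1 else 0)
    with hdeg
  have hsum : ∑ v ∈ V, deg v = 2 * E.card := by
    rw [hdeg, Finset.sum_add_distrib]
    have h1 : ∑ v ∈ V, (E.filter (fun n => f n = v)).card = E.card :=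
      (Finset.card_eq_sum_card_fiberwise (fun n hn => mem_union_right _ (mem_image_of_mem f hn))).symm
    have h2 : ∑ v ∈ V, (if v ∈ E then 1 else 0) = E.card := by
      rw [Finset.sum_ite_mem, Finset.inter_eq_right.mpr hEV, Finset.sum_const, smul_eq_mul,
        mul_one]
    omega
  -- exists a vertex of degree ≤ 2
  have hex : ∃ v ∈ V, deg v ≤ 2 := by
    by_contra hc
    push_neg at hc
    have h3 : 3 * V.card ≤ ∑ v ∈ V, deg v := by
      calc 3 * V.card = ∑ _v ∈ V, 3 := by rw [Finset.sum_const]; ring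
        _ ≤ ∑ v ∈ V, deg v := Finset.sum_le_sum fun v hv => hc v hv
    have h4 : E.card ≤ V.card := Finset.card_le_card hEV
    have h5 : V.card = 0 := by omega
    have : E = ∅ := Finset.card_eq_zero.mp (by omega)
    exact hne.ne_empty this
  obtain ⟨v, hvV, hdv⟩ := hex
  -- the smaller edge set
  set E' : Finset ℕ := E.filter (fun n => n ≠ v ∧ f n ≠ v) with hE'
  have hE'sub : E' ⊆ E := Finset.filter_subset _ _
  have hlt : E' ⊂ E := by
    rw [Finset.ssubset_iff_of_subset hE'sub]
    rcases Finset.mem_union.mp hvV with hv | hv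
    · exact ⟨v, hv, by simp [hE']⟩
    · obtain ⟨n, hn, hfn⟩ := Finset.mem_image.mp hv
      exact ⟨n, hn, by simp [hE', hfn]⟩
  obtain ⟨c, hc⟩ := ih E' hlt (fun n hn => hE n (hE'sub hn))
  -- forbidden colors at v
  set B : Finset (Fin 3) := ((E.filter (fun n => f n = v)).image c) ∪
      (if v ∈ E then {c (f v)} else ∅) with hB
  have hBcard : B.card ≤ 2 := by
    calc B.card ≤ ((E.filter (fun n => f n = v)).image c).card +
        (if v ∈ E then ({c (f v)} : Finset (Fin 3)) else ∅).card := Finset.card_union_le _ _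
      _ ≤ (E.filter (fun n => f n = v)).card + (if v ∈ E then 1 else 0) := by
          gcongr
          · exact Finset.card_image_le
          · split <;> simp
      _ ≤ 2 := hdv
  obtain ⟨i, hi⟩ : ∃ i : Fin 3, i ∉ B := by
    by_contra hc2
    push_neg at hc2
    have : (Finset.univ : Finset (Fin 3)) ⊆ B := fun x _ => hc2 x
    have := Finset.card_le_card this
    simp at this
    omega
  refine ⟨Function.update c v i, fun n hn => ?_⟩
  by_cases h1 : n = v
  · subst h1
    have hfv : f n ≠ n := hE n hn
    rw [Function.update_self, Function.update_of_ne hfv]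
    intro hcon
    exact hi (by rw [hB]; apply Finset.mem_union_right; simp [hn, hcon])
  · by_cases h2 : f n = v
    · rw [h2, Function.update_self, Function.update_of_ne h1]
      intro hcon
      refine hi ?_
      rw [hB]
      exact Finset.mem_union_left _
        (Finset.mem_image.2 ⟨n, Finset.mem_filter.2 ⟨hn, h2⟩, hcon.symm⟩)
    · rw [Function.update_of_ne h2, Function.update_of_ne h1]
      exact hc n (Finset.mem_filter.2 ⟨hn, h1, h2⟩)

/-- Any functional graph is 3-colorable (by compactness). -/
lemma exists_three_color (f : ℕ → ℕ) :
    ∃ c : ℕ → Fin 3, ∀ n, f n ≠ n → c (f n) ≠ c n := by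
  set Z : Finset ℕ → Set (ℕ → Fin 3) :=
    fun F => {c | ∀ n ∈ F, f n ≠ n → c (f n) ≠ c n} with hZ
  have hdir : Directed (· ⊇ ·) Z := fun F G =>
    ⟨F ∪ G, fun c hc n hn => hc n (Finset.mem_union_left _ hn),
      fun c hc n hn => hc n (Finset.mem_union_right _ hn)⟩
  have hne : ∀ F, (Z F).Nonempty := by
    intro F
    obtain ⟨c, hc⟩ := finite_three_color f (F.filter (fun n => f n ≠ n))
      (fun n hn => (Finset.mem_filter.mp hn).2)
    exact ⟨c, fun n hn hfn => hc n (Finset.mem_filter.2 ⟨hn, hfn⟩)⟩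
  have hclosed : ∀ F, IsClosed (Z F) := by
    intro F
    have hZF : Z F = ⋂ n ∈ F, {c : ℕ → Fin 3 | f n ≠ n → c (f n) ≠ c n} := by
      ext c; simp [hZ]
    rw [hZF]
    refine isClosed_biInter fun n _ => ?_
    by_cases hfn : f n = n
    · have : {c : ℕ → Fin 3 | f n ≠ n → c (f n) ≠ c n} = Set.univ := by
        ext c; simp [hfn]
      rw [this]; exact isClosed_univ
    · have : {c : ℕ → Fin 3 | f n ≠ n → c (f n) ≠ c n} =
          (fun c : ℕ → Fin 3 => (c (f n), c n)) ⁻¹' {p | p.1 ≠ p.2} := by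
        ext c; simp [hfn]
      rw [this]
      exact (isClosed_discrete _).preimage ((continuous_apply _).prodMk (continuous_apply _))
  obtain ⟨c, hc⟩ := IsCompact.nonempty_iInter_of_directed_nonempty_isCompact_isClosed Z hdir hne
    (fun F => (hclosed F).isCompact) hclosed
  exact ⟨c, fun n hn => (Set.mem_iInter.mp hc {n}) n (Finset.mem_singleton_self n) hn⟩

theorem stmt_2 (f : ℕ → ℕ) (U : Ultrafilter ℕ) (h : Ultrafilter.map f U = U) :
    {n | f n = n} ∈ U := by
  by_contra hS
  have hSc : {n | f n = n}ᶜ ∈ U := Ultrafilter.compl_mem_iff_notMem.2 hS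
  obtain ⟨c, hc⟩ := exists_three_color f
  obtain ⟨i, hpure⟩ := Ultrafilter.eq_pure_of_finite (Ultrafilter.map c U)
  have hci : c ⁻¹' {i} ∈ U := by
    have hmem : {i} ∈ Ultrafilter.map c U := by
      rw [hpure]; exact rfl
    exact Ultrafilter.mem_map.1 hmem
  set A : Set ℕ := {n | f n = n}ᶜ ∩ c ⁻¹' {i} with hA
  have hAU : A ∈ U := Filter.inter_mem hSc hci
  have hfA : f '' A ∈ U := by
    rw [← h]
    exact Ultrafilter.mem_map.2 (Filter.mem_of_superset hAU (Set.subset_preimage_image f A))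
  have hnon : (A ∩ f '' A).Nonempty := Ultrafilter.nonempty_of_mem (Filter.inter_mem hAU hfA)
  obtain ⟨x, ⟨hx1, hx2⟩, m, hm, rfl⟩ := hnon
  exact hc m hm.1 (by
    have h1 : c (f m) = i := hx2
    have h2 : c m = i := hm.2
    rw [h1, h2])
end

section
/- Let U and V be ultrafilters on ℕ. If there exist functions f, g : ℕ → ℕ with f(U) = V and g(V) = U, then there exists a bijection φ : ℕ → ℕ with φ(U) = V. -/
open Finset in
lemma my_exists_low_fiber (h : ℕ → ℕ) (S : Finset ℕ) (hS : S.Nonempty) :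
    ∃ v ∈ S, (S.filter fun u => h u = v).card ≤ 1 := by
  by_contra hc
  push_neg at hc
  set s := S.filter (fun u => h u ∈ S) with hs
  have key : s.card = ∑ v ∈ S, (s.filter fun u => h u = v).card :=
    Finset.card_eq_sum_card_fiberwise (fun u hu => (Finset.mem_filter.mp hu).2)
  have hfib : ∀ v ∈ S, (S.filter fun u => h u = v).card ≤ (s.filter fun u => h u = v).card := by
    intro v hv
    apply Finset.card_le_card
    intro u hu
    simp only [Finset.mem_filter, hs] at hu ⊢
    exact ⟨⟨hu.1, hu.2 ▸ hv⟩, hu.2⟩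
  have h2 : S.card * 2 ≤ s.card := by
    rw [key]
    calc S.card * 2 = ∑ _v ∈ S, 2 := by rw [Finset.sum_const, smul_eq_mul]
    _ ≤ ∑ v ∈ S, (s.filter fun u => h u = v).card :=
        Finset.sum_le_sum fun v hv => le_trans (hc v hv) (hfib v hv)
  have h3 : s.card ≤ S.card := Finset.card_le_card (Finset.filter_subset _ _)
  have h4 : 0 < S.card := Finset.card_pos.mpr hS
  omega

lemma my_finColor (h : ℕ → ℕ) (S : Finset ℕ) : ∃ c : ℕ → Fin 3,
    ∀ n ∈ S, h n ∈ S → h n ≠ n → c n ≠ c (h n) := by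
  induction S using Finset.strongInduction with
  | _ S ih =>
    rcases S.eq_empty_or_nonempty with rfl | hS
    · exact ⟨fun _ => 0, by simp⟩
    obtain ⟨v, hv, hfib⟩ := my_exists_low_fiber h S hS
    obtain ⟨c, hc⟩ := ih (S.erase v) (Finset.erase_ssubset hv)
    set F : Finset (Fin 3) :=
      insert (c (h v)) (((S.erase v).filter fun u => h u = v).image c) with hF
    have hFcard : F.card ≤ 2 := by
      have h1 : (((S.erase v).filter fun u => h u = v).image c).card ≤ 1 := by
        refine le_trans Finset.card_image_le (le_trans (Finset.card_le_card ?_) hfib)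
        exact Finset.filter_subset_filter _ (Finset.erase_subset _ _)
      calc F.card ≤ _ + 1 := Finset.card_insert_le _ _
      _ ≤ 2 := by omega
    have : (Fᶜ : Finset (Fin 3)).Nonempty := by
      rw [← Finset.card_pos, Finset.card_compl]
      simp only [Fintype.card_fin]
      omega
    obtain ⟨i, hi⟩ := this
    have hiF : i ∉ F := Finset.mem_compl.mp hi
    refine ⟨Function.update c v i, ?_⟩
    intro n hn hhn hne
    by_cases hnv : n = v
    · subst hnv
      rw [Function.update_self, Function.update_of_ne hne]
      intro hcon
      exact hiF (hcon ▸ Finset.mem_insert_self _ _)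
    · rw [Function.update_of_ne hnv]
      by_cases hhv : h n = v
      · rw [hhv, Function.update_self]
        intro hcon
        apply hiF
        rw [← hcon, hF]
        apply Finset.mem_insert_of_mem
        exact Finset.mem_image_of_mem c (Finset.mem_filter.mpr
          ⟨Finset.mem_erase.mpr ⟨hnv, hn⟩, hhv⟩)
      · rw [Function.update_of_ne hhv]
        exact hc n (Finset.mem_erase.mpr ⟨hnv, hn⟩) (Finset.mem_erase.mpr ⟨hhv, hhn⟩) hne

lemma my_globColor (h : ℕ → ℕ) : ∃ c : ℕ → Fin 3, ∀ n, h n ≠ n → c n ≠ c (h n) := by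
  choose cS hcS using my_finColor h
  have : (Filter.atTop : Filter (Finset ℕ)).NeBot := Filter.atTop_neBot
  set W : Ultrafilter (Finset ℕ) := Ultrafilter.of Filter.atTop with hW
  have hWle : (W : Filter (Finset ℕ)) ≤ Filter.atTop := Ultrafilter.of_le _
  have hcol : ∀ n : ℕ, ∃ i : Fin 3, {S | cS S n = i} ∈ W := by
    intro n
    obtain ⟨i, hi⟩ := Ultrafilter.eq_pure_of_finite (Ultrafilter.map (fun S => cS S n) W)
    refine ⟨i, ?_⟩
    have : {i} ∈ (Ultrafilter.map (fun S => cS S n) W : Filter (Fin 3)) := by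
      rw [hi]; exact Set.mem_singleton _
    exact this
  choose col hcolmem using hcol
  refine ⟨col, ?_⟩
  intro n hne
  have hE : {S : Finset ℕ | n ∈ S ∧ h n ∈ S} ∈ W := by
    apply hWle
    filter_upwards [Filter.Ici_mem_atTop ({n, h n} : Finset ℕ)] with S hS
    have h1 : ({n, h n} : Finset ℕ) ⊆ S := hS
    exact ⟨h1 (by simp), h1 (by simp)⟩

  obtain ⟨S, hS1, hS2, hS3⟩ := Ultrafilter.nonempty_of_mem
    (Filter.inter_mem hE (Filter.inter_mem (hcolmem n) (hcolmem (h n))))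
  intro hcon
  exact hcS S n hS1.1 hS1.2 hne (by rw [hS2, hS3, hcon])

lemma my_fixed_mem (U : Ultrafilter ℕ) (h : ℕ → ℕ) (hU : Ultrafilter.map h U = U) :
    {n | h n = n} ∈ U := by
  by_contra hmem
  have hS : {n | h n ≠ n} ∈ U := by
    simpa [Set.compl_setOf] using
      (Ultrafilter.compl_mem_iff_notMem (s := {n | h n = n})).mpr hmem
  obtain ⟨c, hc⟩ := my_globColor h
  obtain ⟨i, hi⟩ := Ultrafilter.eq_pure_of_finite (Ultrafilter.map c U)
  have h1 : {n | c n = i} ∈ U := by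
    have : {i} ∈ (Ultrafilter.map c U : Filter (Fin 3)) := by
      rw [hi]; exact Set.mem_singleton _
    exact this
  have h2 : {n | c (h n) = i} ∈ U := by
    have : {n | c n = i} ∈ Ultrafilter.map h U := by rw [hU]; exact h1
    simpa [Ultrafilter.mem_map, Set.preimage] using this
  obtain ⟨n, hn1, hn2, hn3⟩ := Ultrafilter.nonempty_of_mem
    (Filter.inter_mem hS (Filter.inter_mem h1 h2))
  exact hc n hn1 (by rw [hn2, hn3])

lemma my_split (A : Set ℕ) (hA : A.Infinite) :
    ∃ A₁ A₂ : Set ℕ, A₁ ∪ A₂ = A ∧ A₁.Infinite ∧ A₂.Infinite ∧ Disjoint A₁ A₂ := by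
  haveI := hA.to_subtype
  obtain ⟨d⟩ := nonempty_denumerable ↥A
  haveI := d
  set e := Denumerable.eqv ↥A with he
  set j : ℕ → ℕ := fun k => ((e.symm k : A) : ℕ) with hj
  have hjinj : Function.Injective j := by
    intro a b hab
    exact e.symm.injective (Subtype.ext hab)
  have hjrange : Set.range j = A := by
    rw [hj]
    have : Set.range (fun k => ((e.symm k : A) : ℕ)) =
        Subtype.val '' Set.range (fun k => (e.symm k : A)) := by
      rw [← Set.range_comp]; rfl
    rw [this, Equiv.range_eq_univ, Set.image_univ, Subtype.range_val]
  refine ⟨j '' {k | Even k}, j '' {k | ¬ Even k}, ?_, ?_, ?_, ?_⟩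
  · rw [← Set.image_union]
    have : {k : ℕ | Even k} ∪ {k : ℕ | ¬ Even k} = Set.univ := by
      ext k
      simp only [Set.mem_union, Set.mem_setOf_eq, Set.mem_univ, iff_true]
      exact em (Even k)
    rw [this, Set.image_univ, hjrange]
  · apply Set.Infinite.image hjinj.injOn
    refine Set.infinite_of_injective_forall_mem (f := fun m : ℕ => 2 * m) ?_ ?_
    · intro a b hab
      simp only at hab
      omega
    · intro m
      exact even_two_mul m
  · apply Set.Infinite.image hjinj.injOn
    refine Set.infinite_of_injective_forall_mem (f := fun m : ℕ => 2 * m + 1) ?_ ?_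
    · intro a b hab
      simp only at hab
      omega
    · intro m
      simp [Nat.even_add_one, parity_simps]
  · exact Set.disjoint_image_image fun a ha b hb hEq => hb (hjinj hEq ▸ ha)

theorem stmt_3 (U V : Ultrafilter ℕ) (f g : ℕ → ℕ)
    (hf : Ultrafilter.map f U = V) (hg : Ultrafilter.map g V = U) :
    ∃ φ : Equiv.Perm ℕ, Ultrafilter.map φ U = V := by
  classical
  have hgf : Ultrafilter.map (g ∘ f) U = U := by
    rw [← Ultrafilter.map_map, hf, hg]
  set A : Set ℕ := {n | (g ∘ f) n = n} with hA
  have hAU : A ∈ U := my_fixed_mem U (g ∘ f) hgf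
  have hinj : Set.InjOn f A := by
    intro a ha b hb hab
    have ha' : g (f a) = a := ha
    have hb' : g (f b) = b := hb
    rw [← ha', ← hb', hab]
  have key : ∃ A' ∈ U, A' ⊆ A ∧ (A'ᶜ : Set ℕ).Infinite ∧ ((f '' A')ᶜ : Set ℕ).Infinite := by
    by_cases hfin : A.Finite
    · obtain ⟨a, haA, hUa⟩ := Ultrafilter.eq_pure_of_finite_mem hfin hAU
      refine ⟨{a}, ?_, Set.singleton_subset_iff.mpr haA, ?_, ?_⟩
      · rw [hUa]; simp
      · exact Set.Finite.infinite_compl (Set.finite_singleton a)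
      · rw [Set.image_singleton]
        exact Set.Finite.infinite_compl (Set.finite_singleton (f a))
    · obtain ⟨A₁, A₂, hun, hi1, hi2, hdisj⟩ := my_split A hfin
      have hmem : A₁ ∈ U ∨ A₂ ∈ U := by
        rw [← Ultrafilter.union_mem_iff, hun]; exact hAU
      have hgen : ∀ B C : Set ℕ, B ∪ C = A → B.Infinite → C.Infinite → Disjoint C B →
          C ∈ U → ∃ A' ∈ U, A' ⊆ A ∧ (A'ᶜ : Set ℕ).Infinite ∧
            ((f '' A')ᶜ : Set ℕ).Infinite := by
        intro B C hunion hBi hCi hd hCU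
        have hCsub : C ⊆ A := hunion ▸ Set.subset_union_right
        have hBsub : B ⊆ A := hunion ▸ Set.subset_union_left
        refine ⟨C, hCU, hCsub, ?_, ?_⟩
        · exact hBi.mono (Set.subset_compl_iff_disjoint_left.mpr hd)
        · refine (Set.Infinite.image (hinj.mono hBsub) hBi).mono ?_
          rw [Set.subset_compl_iff_disjoint_left,
            Set.disjoint_iff_inter_eq_empty, ← hinj.image_inter hCsub hBsub,
            Set.disjoint_iff_inter_eq_empty.mp hd, Set.image_empty]
      rcases hmem with hm | hm
      · exact hgen A₂ A₁ (by rw [Set.union_comm]; exact hun) hi2 hi1 hdisj hm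
      · exact hgen A₁ A₂ hun hi1 hi2 hdisj.symm hm
  obtain ⟨A', hA'U, hA'sub, hc1, hc2⟩ := key
  have hinj' : Set.InjOn f A' := hinj.mono hA'sub
  haveI := hc1.to_subtype
  haveI := hc2.to_subtype
  obtain ⟨d1⟩ := nonempty_denumerable ↥(A'ᶜ)
  obtain ⟨d2⟩ := nonempty_denumerable ↥((f '' A')ᶜ)
  haveI := d1; haveI := d2
  set eA : ↥A' ≃ ↥(f '' A') := Equiv.Set.imageOfInjOn f A' hinj' with heA
  set eC : ↥(A'ᶜ) ≃ ↥((f '' A')ᶜ) :=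
    (Denumerable.eqv ↥(A'ᶜ)).trans (Denumerable.eqv ↥((f '' A')ᶜ)).symm with heC
  set φ : Equiv.Perm ℕ :=
    (Equiv.Set.sumCompl A').symm.trans ((eA.sumCongr eC).trans
      (Equiv.Set.sumCompl (f '' A'))) with hφ
  refine ⟨φ, ?_⟩
  have hagree : ∀ n ∈ A', φ n = f n := by
    intro n hn
    rw [hφ]
    simp only [Equiv.trans_apply]
    rw [Equiv.Set.sumCompl_symm_apply_of_mem hn]
    rfl
  have heq : (φ : ℕ → ℕ) =ᶠ[(U : Filter ℕ)] f :=
    Filter.eventuallyEq_of_mem hA'U hagree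
  apply Ultrafilter.coe_injective
  rw [← hf]
  show Filter.map (φ : ℕ → ℕ) U = Filter.map f U
  exact Filter.map_congr heq
end

section
/- The Rudin–Keisler preorder on ultrafilters on ℕ satisfies antisymmetry up to isomorphism: U ≤_RK V and V ≤_RK U hold if and only if there is a bijection φ : ℕ → ℕ with φ(U) = V. -/
open Function

namespace RKAux

attribute [local instance] Classical.propDecidable

variable (h : ℕ → ℕ)

/-- `m` is a periodic point reachable from `n`. -/
def SP (n m : ℕ) : Prop := (∃ k, h^[k] n = m) ∧ ∃ q, h^[q+1] m = m

def EvP (n : ℕ) : Prop := ∃ m, SP h n m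

noncomputable def m0 (n : ℕ) : ℕ := if hn : EvP h n then Nat.find hn else 0

noncomputable def p0 (n : ℕ) : ℕ :=
  (if hq : ∃ q, h^[q+1] (m0 h n) = m0 h n then Nat.find hq else 0) + 1

noncomputable def d0 (n : ℕ) : ℕ :=
  if hd : ∃ k, h^[k] n = m0 h n then Nat.find hd else 0

lemma SP_succ (n m : ℕ) : SP h (h n) m ↔ SP h n m := by
  constructor
  · rintro ⟨⟨k, hk⟩, hq⟩
    exact ⟨⟨k+1, by rw [Function.iterate_succ_apply]; exact hk⟩, hq⟩
  · rintro ⟨⟨k, hk⟩, q, hq⟩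
    refine ⟨?_, q, hq⟩
    cases k with
    | zero =>
      refine ⟨q, ?_⟩
      rw [← Function.iterate_succ_apply]
      simp only [Function.iterate_zero_apply] at hk
      rw [hk]; exact hq
    | succ k => exact ⟨k, by rw [← Function.iterate_succ_apply]; exact hk⟩

lemma evp_succ (n : ℕ) : EvP h (h n) ↔ EvP h n :=
  exists_congr fun m => SP_succ h n m

lemma m0_succ (n : ℕ) : m0 h (h n) = m0 h n := by
  unfold m0
  by_cases hn : EvP h n
  · rw [dif_pos hn, dif_pos ((evp_succ h n).mpr hn)]
    apply le_antisymm
    · exact Nat.find_min' _ ((SP_succ h n _).mpr (Nat.find_spec hn))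
    · exact Nat.find_min' _ ((SP_succ h n _).mp (Nat.find_spec ((evp_succ h n).mpr hn)))
  · rw [dif_neg hn, dif_neg (fun c => hn ((evp_succ h n).mp c))]

lemma p0_succ (n : ℕ) : p0 h (h n) = p0 h n := by
  unfold p0; rw [m0_succ]

lemma m0_spec {n : ℕ} (hn : EvP h n) : SP h n (m0 h n) := by
  unfold m0; rw [dif_pos hn]; exact Nat.find_spec hn

lemma m0_periodic {n : ℕ} (hn : EvP h n) : h^[p0 h n] (m0 h n) = m0 h n := by
  obtain ⟨-, hq⟩ := m0_spec h hn
  unfold p0; rw [dif_pos hq]; exact Nat.find_spec hq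

lemma p0_pos (n : ℕ) : 1 ≤ p0 h n := by unfold p0; omega

lemma p0_min {n : ℕ} (hn : EvP h n) {q : ℕ} (h1 : 1 ≤ q) (h2 : q < p0 h n) :
    h^[q] (m0 h n) ≠ m0 h n := by
  obtain ⟨-, hq⟩ := m0_spec h hn
  unfold p0 at h2; rw [dif_pos hq] at h2
  intro hc
  have := Nat.find_min hq (m := q - 1) (by omega)
  apply this
  rwa [Nat.sub_add_cancel h1]

lemma d0_spec {n : ℕ} (hn : EvP h n) : h^[d0 h n] n = m0 h n := by
  obtain ⟨hk, -⟩ := m0_spec h hn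
  unfold d0; rw [dif_pos hk]; exact Nat.find_spec hk

lemma d0_min {n : ℕ} (hn : EvP h n) {k : ℕ} (hk : k < d0 h n) : h^[k] n ≠ m0 h n := by
  obtain ⟨he, -⟩ := m0_spec h hn
  unfold d0 at hk; rw [dif_pos he] at hk
  exact Nat.find_min he hk

lemma d0_le {n k : ℕ} (hk : h^[k] n = m0 h n) : d0 h n ≤ k := by
  unfold d0; rw [dif_pos ⟨k, hk⟩]; exact Nat.find_min' _ hk

lemma d0_succ_pos {n : ℕ} (hn : EvP h n) (hd : 1 ≤ d0 h n) :
    d0 h (h n) = d0 h n - 1 := by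
  have hn' : EvP h (h n) := (evp_succ h n).mpr hn
  have hle : d0 h (h n) ≤ d0 h n - 1 := by
    apply d0_le
    rw [m0_succ, ← Function.iterate_succ_apply, Nat.succ_eq_add_one,
      Nat.sub_add_cancel hd]
    exact d0_spec h hn
  have hs := d0_spec h hn'
  rw [m0_succ, ← Function.iterate_succ_apply] at hs
  have hge : ¬ (d0 h (h n) + 1 < d0 h n) := fun c => d0_min h hn c hs
  omega

lemma d0_zero {n : ℕ} (hn : EvP h n) (hd : d0 h n = 0) :
    d0 h (h n) = p0 h n - 1 := by
  have hn' : EvP h (h n) := (evp_succ h n).mpr hn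
  have hm : n = m0 h n := by
    have := d0_spec h hn
    rwa [hd, Function.iterate_zero_apply] at this
  have hp := m0_periodic h hn
  set p := p0 h n with hpdef
  have hle : d0 h (h n) ≤ p - 1 := by
    apply d0_le
    rw [m0_succ, ← Function.iterate_succ_apply, Nat.succ_eq_add_one,
      Nat.sub_add_cancel (p0_pos h n), ← hpdef]
    conv_lhs => rw [hm]
    exact hp
  have hs := d0_spec h hn'
  rw [m0_succ, ← Function.iterate_succ_apply] at hs
  set k := d0 h (h n) with hk
  conv_lhs at hs => rw [hm]
  have hge : ¬ (k + 1 < p) := fun c =>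
    p0_min h hn (by omega) c hs
  omega


/-! ### Case B: aperiodic components -/

def Rel (a b : ℕ) : Prop := ∃ p : ℕ × ℕ, h^[p.1] a = h^[p.2] b

lemma rel_refl (a : ℕ) : Rel h a a := ⟨(0, 0), rfl⟩

lemma rel_symm {a b : ℕ} (hab : Rel h a b) : Rel h b a := by
  obtain ⟨⟨i, j⟩, hij⟩ := hab
  exact ⟨(j, i), hij.symm⟩

lemma rel_trans {a b c : ℕ} (hab : Rel h a b) (hbc : Rel h b c) : Rel h a c := by
  obtain ⟨⟨i, j⟩, hij⟩ := hab
  obtain ⟨⟨k, l⟩, hkl⟩ := hbc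
  refine ⟨(k + i, j + l), ?_⟩
  rw [Function.iterate_add_apply, hij, ← Function.iterate_add_apply]
  rw [Nat.add_comm k j, Function.iterate_add_apply, hkl, ← Function.iterate_add_apply]

def relSetoid : Setoid ℕ :=
  ⟨Rel h, fun a => rel_refl h a, fun hab => rel_symm h hab, fun hab hbc => rel_trans h hab hbc⟩

noncomputable def rep (n : ℕ) : ℕ :=
  @Quotient.out ℕ (relSetoid h) (@Quotient.mk ℕ (relSetoid h) n)

lemma rep_rel (n : ℕ) : Rel h (rep h n) n :=
  @Quotient.mk_out ℕ (relSetoid h) n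

lemma rel_rep (n : ℕ) : Rel h n (rep h n) := rel_symm h (rep_rel h n)

lemma rel_succ (n : ℕ) : Rel h (h n) n :=
  ⟨(0, 1), by simp⟩

lemma rep_succ (n : ℕ) : rep h (h n) = rep h n := by
  unfold rep
  congr 1
  exact Quotient.sound (rel_succ h n)

lemma evp_of_rel {a b : ℕ} (hr : Rel h a b) (ha : EvP h a) : EvP h b := by
  obtain ⟨⟨i, j⟩, hij⟩ := hr
  obtain ⟨m, ⟨k, hk⟩, q, hq⟩ := ha
  have hper : ∀ c, h^[(q+1)*c] m = m := fun c => by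
    rw [Function.iterate_mul]
    exact Function.iterate_fixed hq c
  have hE : h^[(q+1)*i + k] a = m := by
    rw [Function.iterate_add_apply, hk, hper]
  have hEi : i ≤ (q+1)*i + k := by nlinarith
  have h2 : h^[((q+1)*i + k - i) + i] a = m := by
    rwa [Nat.sub_add_cancel hEi]
  rw [Function.iterate_add_apply, hij, ← Function.iterate_add_apply] at h2
  exact ⟨m, ⟨_, h2⟩, q, hq⟩

lemma evp_of_cycle {n a b : ℕ} (hab : a < b) (he : h^[a] n = h^[b] n) : EvP h n := by
  refine ⟨h^[a] n, ⟨a, rfl⟩, b - a - 1, ?_⟩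
  rw [← Function.iterate_add_apply]
  have : b - a - 1 + 1 + a = b := by omega
  rw [this, ← he]

lemma not_evp_inj {n : ℕ} (hn : ¬ EvP h n) {a b : ℕ} (hab : h^[a] n = h^[b] n) :
    a = b := by
  rcases lt_trichotomy a b with hlt | heq | hgt
  · exact absurd (evp_of_cycle h hlt hab) hn
  · exact heq
  · exact absurd (evp_of_cycle h hgt hab.symm) hn

lemma not_evp_rep {n : ℕ} (hn : ¬ EvP h n) : ¬ EvP h (rep h n) :=
  fun c => hn (evp_of_rel h (rep_rel h n) c)

noncomputable def gZ (n : ℕ) : ℤ :=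
  ((Classical.choose (rel_rep h n)).2 : ℤ) - (Classical.choose (rel_rep h n)).1

lemma gZ_welldef {n : ℕ} (hn : ¬ EvP h n) {i j i' j' : ℕ}
    (hij : h^[i] n = h^[j] (rep h n)) (hij' : h^[i'] n = h^[j'] (rep h n)) :
    (j : ℤ) - i = (j' : ℤ) - i' := by
  have h1 : h^[i' + j] (rep h n) = h^[i' + i] n := by
    rw [Function.iterate_add_apply, ← hij, ← Function.iterate_add_apply]
  have h2 : h^[i + j'] (rep h n) = h^[i + i'] n := by
    rw [Function.iterate_add_apply, ← hij', ← Function.iterate_add_apply]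
  have h3 : h^[i' + j] (rep h n) = h^[i + j'] (rep h n) := by
    rw [h1, h2, Nat.add_comm i i']
  have h4 := not_evp_inj h (not_evp_rep h hn) h3
  omega

lemma gZ_eq {n : ℕ} (hn : ¬ EvP h n) {i j : ℕ} (hij : h^[i] n = h^[j] (rep h n)) :
    gZ h n = (j : ℤ) - i := by
  have hspec := Classical.choose_spec (rel_rep h n)
  exact gZ_welldef h hn hspec hij

lemma gZ_succ {n : ℕ} (hn : ¬ EvP h n) : gZ h (h n) = gZ h n + 1 := by
  have hn' : ¬ EvP h (h n) := fun c => hn ((evp_succ h n).mp c)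
  obtain ⟨⟨i, j⟩, hij⟩ := rel_rep h n
  have h1 : gZ h n = (j : ℤ) - i := gZ_eq h hn hij
  have hij' : h^[i] (h n) = h^[j+1] (rep h (h n)) := by
    rw [rep_succ, ← Function.iterate_succ_apply, Function.iterate_succ_apply',
      Function.iterate_succ_apply', hij]
  have h2 : gZ h (h n) = ((j : ℤ) + 1) - i := by
    have := gZ_eq h hn' hij'
    rw [this]; push_cast; ring
  rw [h2, h1]; ring

/-! ### The coloring -/

noncomputable def col (n : ℕ) : Fin 3 :=
  if EvP h n then
    if p0 h n % 2 = 1 ∧ d0 h n = p0 h n - 1 then 2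
    else if d0 h n % 2 = 0 then 0 else 1
  else if gZ h n % 2 = 0 then 0 else 1

theorem col_ne {n : ℕ} (hne : h n ≠ n) : col h n ≠ col h (h n) := by
  by_cases hn : EvP h n
  · have hn' : EvP h (h n) := (evp_succ h n).mpr hn
    have hp' : p0 h (h n) = p0 h n := p0_succ h n
    have hp1 : 1 ≤ p0 h n := p0_pos h n
    by_cases hd : d0 h n = 0
    · have hm : n = m0 h n := by
        have := d0_spec h hn
        rwa [hd, Function.iterate_zero_apply] at this
      have hp2 : 2 ≤ p0 h n := by
        by_contra hc
        have hp1' : p0 h n = 1 := by omega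
        have := m0_periodic h hn
        rw [hp1', Function.iterate_one, ← hm] at this
        exact hne this
      have hd' : d0 h (h n) = p0 h n - 1 := d0_zero h hn hd
      unfold col
      rw [if_pos hn, if_pos hn', hp', hd', hd]
      split_ifs <;> first | omega | decide
    · have hd' : d0 h (h n) = d0 h n - 1 := d0_succ_pos h hn (by omega)
      have h1 : 1 ≤ d0 h n := by omega
      unfold col
      rw [if_pos hn, if_pos hn', hp', hd']
      split_ifs <;> first | omega | decide
  · have hn' : ¬ EvP h (h n) := fun c => hn ((evp_succ h n).mp c)
    have hg : gZ h (h n) = gZ h n + 1 := gZ_succ h hn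
    unfold col
    rw [if_neg hn, if_neg hn', hg]
    split_ifs <;> first | omega | decide


/-! ### Fixed point lemma -/

theorem fixed_mem (V : Ultrafilter ℕ) (hV : Ultrafilter.map h V = V) :
    {n | h n = n} ∈ V := by
  by_contra hD
  have hD' : {n | h n ≠ n} ∈ V := by
    have : {n | h n = n}ᶜ ∈ V := Ultrafilter.compl_mem_iff_notMem.mpr hD
    have heq : {n | h n = n}ᶜ = {n | h n ≠ n} := by ext n; simp
    rwa [heq] at this
  have hex : ∃ i : Fin 3, {n | h n ≠ n ∧ col h n = i} ∈ V := by
    by_contra hc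
    push_neg at hc
    have h0 : {n | h n ≠ n ∧ col h n = 0}ᶜ ∈ V := Ultrafilter.compl_mem_iff_notMem.mpr (hc 0)
    have h1 : {n | h n ≠ n ∧ col h n = 1}ᶜ ∈ V := Ultrafilter.compl_mem_iff_notMem.mpr (hc 1)
    have h2 : {n | h n ≠ n ∧ col h n = 2}ᶜ ∈ V := Ultrafilter.compl_mem_iff_notMem.mpr (hc 2)
    have hmem := Filter.inter_mem (Filter.inter_mem (Filter.inter_mem hD' h0) h1) h2
    obtain ⟨n, ⟨⟨hn1, hn2⟩, hn3⟩, hn4⟩ := Filter.nonempty_of_mem hmem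
    simp only [Set.mem_compl_iff, Set.mem_setOf_eq, not_and] at hn2 hn3 hn4
    have := hn2 hn1; have := hn3 hn1; have := hn4 hn1
    have hfin : col h n = 0 ∨ col h n = 1 ∨ col h n = 2 := by
      generalize col h n = x; fin_cases x <;> simp
    tauto
  obtain ⟨i, hi⟩ := hex
  have hpre : h ⁻¹' {n | h n ≠ n ∧ col h n = i} ∈ V := by
    have hi' : {n | h n ≠ n ∧ col h n = i} ∈ Ultrafilter.map h V := by rwa [hV]
    exact (Ultrafilter.mem_map).mp hi'
  obtain ⟨n, ⟨hne, hcn⟩, hph⟩ := Filter.nonempty_of_mem (Filter.inter_mem hi hpre)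
  have hch : col h (h n) = i := hph.2
  exact col_ne h hne (hcn.trans hch.symm)

/-! ### Building a permutation from an injection on a set -/

lemma exists_split {E : Set ℕ} (hE : E.Infinite) :
    ∃ S ⊆ E, S.Infinite ∧ (E \ S).Infinite := by
  haveI : Infinite E := hE.to_subtype
  letI : Denumerable E := Nat.Subtype.denumerable E
  let e : ℕ ≃ E := (Denumerable.eqv E).symm
  refine ⟨Set.range (fun k => (e (2 * k) : ℕ)), ?_, ?_, ?_⟩
  · rintro x ⟨k, rfl⟩; exact (e (2 * k)).2
  · apply Set.infinite_range_of_injective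
    intro a b hab
    have := e.injective (Subtype.val_injective hab)
    omega
  · apply Set.infinite_of_injective_forall_mem
      (f := fun k : ℕ => (e (2 * k + 1) : ℕ))
    case hi =>
      intro a b hab
      have := e.injective (Subtype.val_injective hab)
      omega
    case hf =>
      intro k
      refine ⟨(e (2 * k + 1)).2, ?_⟩
      rintro ⟨j, hj⟩
      have := e.injective (Subtype.val_injective hj)
      omega

lemma exists_perm (g : ℕ → ℕ) (E : Set ℕ) (hinj : Set.InjOn g E)
    (hEc : Eᶜ.Infinite) (hgc : (g '' E)ᶜ.Infinite) :
    ∃ φ : Equiv.Perm ℕ, ∀ x ∈ E, φ x = g x := by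
  haveI : Infinite ↥Eᶜ := hEc.to_subtype
  haveI : Infinite ↥(g '' E)ᶜ := hgc.to_subtype
  letI : Denumerable ↥Eᶜ := Nat.Subtype.denumerable _
  letI : Denumerable ↥(g '' E)ᶜ := Nat.Subtype.denumerable _
  let e₁ : E ≃ (g '' E) := Equiv.Set.imageOfInjOn g E hinj
  let e₂ : ↥Eᶜ ≃ ↥(g '' E)ᶜ := (Denumerable.eqv _).trans (Denumerable.eqv _).symm
  refine ⟨(Equiv.Set.sumCompl E).symm.trans ((e₁.sumCongr e₂).trans
    (Equiv.Set.sumCompl (g '' E))), fun x hx => ?_⟩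
  simp only [Equiv.trans_apply]
  rw [Equiv.Set.sumCompl_symm_apply_of_mem hx]
  simp [e₁, Equiv.Set.imageOfInjOn]

end RKAux

theorem stmt_5 (U V : Ultrafilter ℕ) :
    ((∃ f : ℕ → ℕ, Ultrafilter.map f V = U) ∧ (∃ g : ℕ → ℕ, Ultrafilter.map g U = V)) ↔
      ∃ φ : Equiv.Perm ℕ, Ultrafilter.map φ U = V := by
  constructor
  · rintro ⟨⟨f, hf⟩, ⟨g, hg⟩⟩
    have hfg : Ultrafilter.map (f ∘ g) U = U := by
      rw [← Ultrafilter.map_map, hg]; exact hf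
    set E : Set ℕ := {n | (f ∘ g) n = n} with hEdef
    have hE : E ∈ U := RKAux.fixed_mem (f ∘ g) U hfg
    have hinj : Set.InjOn g E := by
      intro a ha b hb hab
      have ha' : f (g a) = a := ha
      have hb' : f (g b) = b := hb
      rw [← ha', ← hb', hab]
    have key : ∃ E' ∈ U, E' ⊆ E ∧ E'ᶜ.Infinite ∧ (g '' E')ᶜ.Infinite := by
      by_cases hfin : E.Finite
      · obtain ⟨a, haE, hU⟩ := Ultrafilter.eq_pure_of_finite_mem hfin hE
        refine ⟨{a}, ?_, ?_, ?_, ?_⟩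
        · rw [hU]; simp
        · simpa using haE
        · exact (Set.finite_singleton a).infinite_compl
        · rw [Set.image_singleton]
          exact (Set.finite_singleton _).infinite_compl
      · obtain ⟨S, hSE, hS, hES⟩ := RKAux.exists_split (hfin : E.Infinite)
        by_cases hSU : S ∈ U
        · refine ⟨S, hSU, hSE, ?_, ?_⟩
          · exact hES.mono (fun x hx => hx.2)
          · have himg : (g '' (E \ S)).Infinite := hES.image (hinj.mono Set.diff_subset)
            apply himg.mono
            rintro y ⟨x, hx, rfl⟩ ⟨x', hx', heq⟩
            obtain rfl := hinj (hSE hx') hx.1 heq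
            exact hx.2 hx'
        · have hSc : E \ S ∈ U := by
            have h1 : Sᶜ ∈ U := Ultrafilter.compl_mem_iff_notMem.mpr hSU
            have h2 := Filter.inter_mem hE h1
            rwa [← Set.diff_eq] at h2
          refine ⟨E \ S, hSc, Set.diff_subset, ?_, ?_⟩
          · exact hS.mono (fun x hx hc => hc.2 hx)
          · have himg : (g '' S).Infinite := hS.image (hinj.mono hSE)
            apply himg.mono
            rintro y ⟨x, hx, rfl⟩ ⟨x', hx', heq⟩
            obtain rfl := hinj hx'.1 (hSE hx) heq
            exact hx'.2 hx
    obtain ⟨E', hE'U, hE'E, hcE', hcg⟩ := key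
    obtain ⟨φ, hφ⟩ := RKAux.exists_perm g E' (hinj.mono hE'E) hcE' hcg
    refine ⟨φ, ?_⟩
    have hmapeq : Ultrafilter.map (⇑φ) U = Ultrafilter.map g U := by
      apply Ultrafilter.coe_injective
      rw [Ultrafilter.coe_map, Ultrafilter.coe_map]
      apply Filter.map_congr
      exact Filter.mem_of_superset hE'U (fun x hx => hφ x hx)
    rw [hmapeq, hg]
  · rintro ⟨φ, hφ⟩
    refine ⟨⟨⇑φ.symm, ?_⟩, ⟨⇑φ, hφ⟩⟩
    rw [← hφ, Ultrafilter.map_map]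
    simp [Equiv.symm_comp_self]
end

section
/- Let U be a nonprincipal ultrafilter on ℕ and let W be an ultrafilter on ℕ × ℕ extending the product filter U × U. Then W ≤_RK U if and only if W is the diagonal ultrafilter Δ_U = {X ⊆ ℕ × ℕ | {n | (n,n) ∈ X} ∈ U}. -/
open Finset in
lemma finite_coloring (f : ℕ → ℕ) (hf : ∀ n, f n ≠ n) :
    ∀ S : Finset ℕ, ∃ c : ℕ → Fin 3, ∀ n ∈ S, f n ∈ S → c n ≠ c (f n) := by
  intro S
  induction S using Finset.strongInduction with
  | _ S IH =>
    rcases S.eq_empty_or_nonempty with rfl | hne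
    · exact ⟨fun _ => 0, by simp⟩
    · set D : ℕ → ℕ := fun v => (S.filter fun m => f m = v).card + (if f v ∈ S then 1 else 0)
        with hD
    -- sum of degrees bound
      have hsum : ∑ v ∈ S, D v ≤ ∑ v ∈ S, 2 := by
        have h1 : ∑ v ∈ S, (S.filter fun m => f m = v).card
            = (S.filter fun m => f m ∈ S).card := by
          rw [Finset.card_eq_sum_card_fiberwise (f := f) (t := S)
            (s := S.filter fun m => f m ∈ S)
            (by intro x hx; exact (Finset.mem_filter.mp hx).2)]
          refine Finset.sum_congr rfl fun v hv => ?_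
          congr 1
          rw [Finset.filter_filter]
          ext m
          simp only [Finset.mem_filter]
          constructor
          · rintro ⟨hm, hfm⟩
            exact ⟨hm, hfm ▸ hv, hfm⟩
          · rintro ⟨hm, _, hfm⟩
            exact ⟨hm, hfm⟩
        have h2 : ∑ v ∈ S, (if f v ∈ S then 1 else 0)
            = (S.filter fun v => f v ∈ S).card := by
          rw [Finset.card_filter]
        calc ∑ v ∈ S, D v
            = (S.filter fun m => f m ∈ S).card + (S.filter fun v => f v ∈ S).card := by
              rw [hD, Finset.sum_add_distrib, h1, h2]
          _ ≤ S.card + S.card := by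
              gcongr <;> exact Finset.filter_subset _ _
          _ = ∑ v ∈ S, 2 := by
              simp only [Finset.sum_const, smul_eq_mul]
              omega
      obtain ⟨v, hvS, hvD⟩ := Finset.exists_le_of_sum_le hne hsum
      obtain ⟨c, hc⟩ := IH (S.erase v) (Finset.erase_ssubset hvS)
      set T : Finset (Fin 3) :=
        ((S.filter fun m => f m = v).image c) ∪ (if f v ∈ S then {c (f v)} else ∅) with hT
      have hTcard : T.card < 3 := by
        have hle : T.card ≤ (S.filter fun m => f m = v).card + (if f v ∈ S then 1 else 0) := by
          refine le_trans (Finset.card_union_le _ _) ?_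
          gcongr
          · exact Finset.card_image_le
          · split <;> simp
        have hvD' : (S.filter fun m => f m = v).card + (if f v ∈ S then 1 else 0) ≤ 2 := hvD
        omega
      obtain ⟨w, hw⟩ : ∃ w : Fin 3, w ∉ T := by
        by_contra h
        push_neg at h
        have hsub : (Finset.univ : Finset (Fin 3)) ⊆ T := fun x _ => h x
        have := Finset.card_le_card hsub
        simp only [Finset.card_univ, Fintype.card_fin] at this
        omega
      refine ⟨Function.update c v w, ?_⟩
      intro n hnS hfnS
      have hfn : f n ≠ n := hf n
      rcases eq_or_ne n v with rfl | hnv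
      · rw [Function.update_self, Function.update_of_ne hfn]
        intro hcontra
        apply hw
        rw [hT]
        refine Finset.mem_union_right _ ?_
        rw [if_pos hfnS]
        simp [hcontra]
      · rcases eq_or_ne (f n) v with hfv | hfv
        · rw [Function.update_of_ne hnv, hfv, Function.update_self]
          intro hcontra
          apply hw
          rw [hT]
          refine Finset.mem_union_left _ ?_
          exact Finset.mem_image.mpr ⟨n, Finset.mem_filter.mpr ⟨hnS, hfv⟩, hcontra⟩
        · rw [Function.update_of_ne hnv, Function.update_of_ne hfv]
          exact hc n (Finset.mem_erase.mpr ⟨hnv, hnS⟩) (Finset.mem_erase.mpr ⟨hfv, hfnS⟩)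

lemma fin3_cases : ∀ v : Fin 3, v = 0 ∨ v = 1 ∨ v = 2 := by decide

lemma ultra_color {α : Type*} (V : Ultrafilter α) (c : α → Fin 3) :
    ∃ i : Fin 3, {k | c k = i} ∈ V := by
  by_contra h
  push_neg at h
  have h0 : {k | c k = 0}ᶜ ∈ V := Ultrafilter.compl_mem_iff_notMem.mpr (h 0)
  have h1 : {k | c k = 1}ᶜ ∈ V := Ultrafilter.compl_mem_iff_notMem.mpr (h 1)
  have h2 : {k | c k = 2}ᶜ ∈ V := Ultrafilter.compl_mem_iff_notMem.mpr (h 2)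
  obtain ⟨k, hk0, hk1, hk2⟩ := Filter.nonempty_of_mem
    (Filter.inter_mem h0 (Filter.inter_mem h1 h2))
  rcases fin3_cases (c k) with h | h | h
  · exact hk0 h
  · exact hk1 h
  · exact hk2 h

lemma global_coloring (f : ℕ → ℕ) (hf : ∀ n, f n ≠ n) :
    ∃ c : ℕ → Fin 3, ∀ n, c n ≠ c (f n) := by
  choose c hc using fun k => finite_coloring f hf (Finset.range k)
  set V : Ultrafilter ℕ := Filter.hyperfilter ℕ with hV
  have hcof : ∀ N : ℕ, {k | N < k} ∈ V := by
    intro N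
    apply Filter.hyperfilter_le_cofinite
    rw [Filter.mem_cofinite]
    have : {k : ℕ | N < k}ᶜ = {k | k ≤ N} := by ext k; simp [not_lt]
    rw [this]
    exact Set.finite_Iic N
  have hex : ∀ n, ∃ i : Fin 3, {k | c k n = i} ∈ V := fun n => ultra_color V (fun k => c k n)
  choose C hC using hex
  refine ⟨C, fun n => ?_⟩
  obtain ⟨k, ⟨hk1, hk2⟩, hk3⟩ := Filter.nonempty_of_mem
    (Filter.inter_mem (Filter.inter_mem (hC n) (hC (f n))) (hcof (max n (f n))))
  have hn : n ∈ Finset.range k := Finset.mem_range.mpr (lt_of_le_of_lt (le_max_left _ _) hk3)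
  have hfn : f n ∈ Finset.range k := Finset.mem_range.mpr (lt_of_le_of_lt (le_max_right _ _) hk3)
  have := hc k n hn hfn
  rw [hk1, hk2] at this
  exact this

lemma fixed_mem (U : Ultrafilter ℕ) (f : ℕ → ℕ)
    (h : ∀ A ∈ U, f ⁻¹' A ∈ U) : {n | f n = n} ∈ U := by
  by_contra hS
  have hS' : {n | f n = n}ᶜ ∈ U := Ultrafilter.compl_mem_iff_notMem.mpr hS
  set g : ℕ → ℕ := fun n => if f n = n then n + 1 else f n with hg
  have hgf : ∀ n, g n ≠ n := by
    intro n
    show (if f n = n then n + 1 else f n) ≠ n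
    split
    · omega
    · assumption
  obtain ⟨c, hc⟩ := global_coloring g hgf
  obtain ⟨i, hi⟩ := ultra_color U c
  have h1 : f ⁻¹' {n | c n = i} ∈ U := h _ hi
  obtain ⟨n, ⟨hn1, hn2⟩, hn3⟩ := Filter.nonempty_of_mem
    (Filter.inter_mem (Filter.inter_mem hi h1) hS')
  have hn3' : ¬ f n = n := hn3
  have hgn : g n = f n := by
    show (if f n = n then n + 1 else f n) = f n
    rw [if_neg hn3']
  apply hc n
  rw [hgn]
  show c n = c (f n)
  rw [hn1, hn2]

theorem stmt_9 (U : Ultrafilter ℕ) (hU : ∀ n, U ≠ pure n)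
    (W : Ultrafilter (ℕ × ℕ)) (hW : ∀ A ∈ U, ∀ B ∈ U, A ×ˢ B ∈ W) :
    (∃ F : ℕ → ℕ × ℕ, Ultrafilter.map F U = W) ↔
      W = Ultrafilter.map (fun n => (n, n)) U := by
  constructor
  · rintro ⟨F, rfl⟩
    have huniv : (Set.univ : Set ℕ) ∈ U := Filter.univ_mem
    have hf : ∀ A ∈ U, (fun n => (F n).1) ⁻¹' A ∈ U := by
      intro A hA
      have hm := hW A hA Set.univ huniv
      rw [Ultrafilter.mem_map] at hm
      refine Filter.mem_of_superset hm ?_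
      intro n hn
      exact hn.1
    have hg : ∀ A ∈ U, (fun n => (F n).2) ⁻¹' A ∈ U := by
      intro A hA
      have hm := hW Set.univ huniv A hA
      rw [Ultrafilter.mem_map] at hm
      refine Filter.mem_of_superset hm ?_
      intro n hn
      exact hn.2
    have h1 := fixed_mem U _ hf
    have h2 := fixed_mem U _ hg
    apply Ultrafilter.coe_injective
    rw [Ultrafilter.coe_map, Ultrafilter.coe_map]
    apply Filter.map_congr
    filter_upwards [h1, h2] with n e1 e2
    exact Prod.ext e1 e2
  · rintro rfl
    exact ⟨fun n => (n, n), rfl⟩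
end

section
/- If U is a nonprincipal ultrafilter on ℕ, then the tensor product U ⊗ U is not Rudin–Keisler below U; in particular, U ⊗ U is not isomorphic to U. -/
open Set Filter

namespace Aux

/-- interval endpoints: `ub f k` grows so that `f` maps `[0, ub f k]` below `ub f (k+1)`. -/
def ub (f : ℕ → ℕ) : ℕ → ℕ
  | 0 => 0
  | k+1 => (Finset.range (ub f k + 1)).sup (fun n => max (f n) n) + 1

lemma ub_lt_succ (f : ℕ → ℕ) (k : ℕ) : ub f k < ub f (k+1) := by
  have h : ub f k ≤ (Finset.range (ub f k + 1)).sup (fun n => max (f n) n) := by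
    have : ub f k ∈ Finset.range (ub f k + 1) := by simp
    exact le_trans (le_max_right _ _) (Finset.le_sup (f := fun n => max (f n) n) this)
  simpa [ub] using Nat.lt_succ_of_le h

lemma ub_strictMono (f : ℕ → ℕ) : StrictMono (ub f) :=
  strictMono_nat_of_lt_succ (ub_lt_succ f)

lemma f_lt_ub (f : ℕ → ℕ) {n k : ℕ} (h : n ≤ ub f k) : f n < ub f (k+1) := by
  have hn : n ∈ Finset.range (ub f k + 1) := by simpa using Nat.lt_succ_of_le h
  have : f n ≤ (Finset.range (ub f k + 1)).sup (fun n => max (f n) n) :=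
    le_trans (le_max_left _ _) (Finset.le_sup (f := fun n => max (f n) n) hn)
  simpa [ub] using Nat.lt_succ_of_le this

/-- index of the interval containing `n`. -/
def kidx (f : ℕ → ℕ) (n : ℕ) : ℕ := Nat.findGreatest (fun k => ub f k ≤ n) n

lemma ub_kidx_le (f : ℕ → ℕ) (n : ℕ) : ub f (kidx f n) ≤ n := by
  have := Nat.findGreatest_spec (P := fun k => ub f k ≤ n) (Nat.zero_le n) (by simp [ub])
  exact this

lemma lt_ub_kidx_succ (f : ℕ → ℕ) (n : ℕ) : n < ub f (kidx f n + 1) := by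
  rcases lt_or_ge n (ub f (kidx f n + 1)) with h | h
  · exact h
  · exfalso
    have hk : kidx f n < n := by
      have : kidx f n + 1 ≤ ub f (kidx f n + 1) := (ub_strictMono f).le_apply
      omega
    have := Nat.findGreatest_is_greatest (P := fun k => ub f k ≤ n)
      (Nat.lt_succ_of_le (le_refl (kidx f n))) (by omega)
    exact this h

lemma kidx_le_of_le (f : ℕ → ℕ) {n m : ℕ} (h : n ≤ m) : kidx f n ≤ kidx f m := by
  apply Nat.le_findGreatest
  · exact le_trans (Nat.findGreatest_le n) h
  · exact le_trans (ub_kidx_le f n) h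

lemma kidx_f_le (f : ℕ → ℕ) (n : ℕ) : kidx f (f n) ≤ kidx f n + 1 := by
  have h1 : f n < ub f (kidx f n + 2) := by
    have := lt_ub_kidx_succ f n
    exact f_lt_ub f (by omega)
  have h2 : ub f (kidx f (f n)) ≤ f n := ub_kidx_le f (f n)
  by_contra h
  have : ub f (kidx f n + 2) ≤ ub f (kidx f (f n)) :=
    (ub_strictMono f).le_iff_le.2 (by omega)
  omega

/-- rank for the decreasing case -/
def r1 (f : ℕ → ℕ) (n : ℕ) : ℕ :=
  if h : f n < n then r1 f (f n) + 1 else 0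
decreasing_by exact h

/-- rank for the increasing-within-interval case -/
def r3 (f : ℕ → ℕ) (n : ℕ) : ℕ :=
  if h : n < f n ∧ kidx f (f n) = kidx f n then r3 f (f n) + 1 else 0
termination_by ub f (kidx f n + 1) - n
decreasing_by
  have h1 := lt_ub_kidx_succ f n
  rw [h.2]
  omega

lemma parity (U : Ultrafilter ℕ) (f h : ℕ → ℕ) (hf : Ultrafilter.map f U = U)
    (S : Set ℕ) (hS : S ∈ U) (hh : ∀ n ∈ S, ¬ (Even (h n) ↔ Even (h (f n)))) : False := by
  set E : Set ℕ := {n | Even (h n)} with hE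
  have hpre : ∀ T : Set ℕ, T ∈ U → f ⁻¹' T ∈ U := by
    intro T hT
    rw [← hf] at hT
    exact hT
  rcases (Ultrafilter.mem_or_compl_mem U E) with he | he
  · have : S ∩ (E ∩ f ⁻¹' E) ∈ U := inter_mem hS (inter_mem he (hpre E he))
    obtain ⟨n, hnS, hnE, hnf⟩ := Ultrafilter.nonempty_of_mem this
    exact hh n hnS ⟨fun _ => hnf, fun _ => hnE⟩
  · have : S ∩ (Eᶜ ∩ f ⁻¹' Eᶜ) ∈ U := inter_mem hS (inter_mem he (hpre _ he))
    obtain ⟨n, hnS, hnE, hnf⟩ := Ultrafilter.nonempty_of_mem this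
    exact hh n hnS ⟨fun h' => absurd h' hnE, fun h' => absurd h' hnf⟩

lemma fixed (U : Ultrafilter ℕ) (f : ℕ → ℕ) (hf : Ultrafilter.map f U = U) :
    {n | f n = n} ∈ U := by
  by_contra h
  have hS : {n | f n ≠ n} ∈ U := (Ultrafilter.compl_mem_iff_notMem (s := {n | f n = n})).2 h
  set S1 : Set ℕ := {n | f n < n}
  set S2 : Set ℕ := {n | n < f n ∧ kidx f (f n) ≠ kidx f n}
  set S3 : Set ℕ := {n | n < f n ∧ kidx f (f n) = kidx f n}
  have hsub : {n | f n ≠ n} ⊆ S1 ∪ (S2 ∪ S3) := by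
    intro n hn
    simp only [S1, S2, S3, mem_union, mem_setOf_eq]
    rcases lt_trichotomy (f n) n with h' | h' | h'
    · exact Or.inl h'
    · exact absurd h' hn
    · rcases eq_or_ne (kidx f (f n)) (kidx f n) with hk | hk
      · exact Or.inr (Or.inr ⟨h', hk⟩)
      · exact Or.inr (Or.inl ⟨h', hk⟩)
  have hmem : S1 ∪ (S2 ∪ S3) ∈ U := Filter.mem_of_superset hS hsub
  rcases (Ultrafilter.union_mem_iff.1 hmem) with h1 | h23
  · refine parity U f (r1 f) hf S1 h1 ?_
    intro n hn
    simp only [S1, mem_setOf_eq] at hn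
    have : r1 f n = r1 f (f n) + 1 := by rw [r1]; simp [hn]
    rw [this, Nat.even_add_one]
    tauto
  rcases (Ultrafilter.union_mem_iff.1 h23) with h2 | h3
  · refine parity U f (kidx f) hf S2 h2 ?_
    intro n hn
    simp only [S2, mem_setOf_eq] at hn
    obtain ⟨hlt, hne⟩ := hn
    have hle : kidx f n ≤ kidx f (f n) := kidx_le_of_le f hlt.le
    have hle2 : kidx f (f n) ≤ kidx f n + 1 := kidx_f_le f n
    have heq : kidx f (f n) = kidx f n + 1 := by omega
    rw [heq, Nat.even_add_one]
    tauto
  · refine parity U f (r3 f) hf S3 h3 ?_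
    intro n hn
    simp only [S3, mem_setOf_eq] at hn
    have : r3 f n = r3 f (f n) + 1 := by rw [r3]; simp [hn.1, hn.2]
    rw [this, Nat.even_add_one]
    tauto

end Aux

/-- The tensor product of two ultrafilters on ℕ:
`X ∈ U ⊗ V ↔ {n | {m | (n, m) ∈ X} ∈ V} ∈ U`. -/
def tensor (U V : Ultrafilter ℕ) : Ultrafilter (ℕ × ℕ) :=
  U.bind (fun n => V.map (fun m => (n, m)))

lemma mem_tensor {U V : Ultrafilter ℕ} {X : Set (ℕ × ℕ)} :
    X ∈ tensor U V ↔ {n | {m | (n, m) ∈ X} ∈ V} ∈ U := by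
  show X ∈ Filter.bind (U : Filter ℕ) (fun n => Filter.map (fun m => (n, m)) (V : Filter ℕ)) ↔ _
  rw [Filter.mem_bind']
  simp [Set.preimage]

theorem stmt_10 (U : Ultrafilter ℕ) (hU : ∀ n, U ≠ pure n) :
    (¬ ∃ F : ℕ → ℕ × ℕ, Ultrafilter.map F U = tensor U U) ∧
    (¬ ∃ φ : ℕ ≃ ℕ × ℕ, Ultrafilter.map φ U = tensor U U) := by
  have main : ¬ ∃ F : ℕ → ℕ × ℕ, Ultrafilter.map F U = tensor U U := by
    rintro ⟨F, hF⟩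
    set f : ℕ → ℕ := fun n => (F n).1 with hf
    set g : ℕ → ℕ := fun n => (F n).2 with hg
    -- map f U = U
    have hfU : Ultrafilter.map f U = U := by
      ext S
      have : f ⁻¹' S = F ⁻¹' (Prod.fst ⁻¹' S) := rfl
      rw [Ultrafilter.mem_map, this, ← Ultrafilter.mem_map, hF, mem_tensor]
      constructor
      · intro h
        have : {n | {m | (n, m) ∈ Prod.fst ⁻¹' S} ∈ U} ⊆ S := by
          intro n hn
          simp only [Set.mem_setOf_eq, Set.mem_preimage] at hn
          by_contra hns
          have : ({m | n ∈ S} : Set ℕ) = ∅ := by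
            ext m; simp [hns]
          rw [this] at hn
          exact (Ultrafilter.empty_notMem) hn
        exact Filter.mem_of_superset h this
      · intro h
        refine Filter.mem_of_superset h ?_
        intro n hn
        simp only [Set.mem_setOf_eq, Set.mem_preimage]
        have : ({m | n ∈ S} : Set ℕ) = Set.univ := by ext m; simp [hn]
        rw [this]; exact Filter.univ_mem
    have hgU : Ultrafilter.map g U = U := by
      ext S
      have : g ⁻¹' S = F ⁻¹' (Prod.snd ⁻¹' S) := rfl
      rw [Ultrafilter.mem_map, this, ← Ultrafilter.mem_map, hF, mem_tensor]
      have hset : {n : ℕ | {m : ℕ | (n, m) ∈ Prod.snd ⁻¹' S} ∈ U} = {n : ℕ | S ∈ U} := by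
        ext n; simp [Set.preimage]
      rw [hset]
      constructor
      · intro h
        by_contra hS
        have : ({n | S ∈ U} : Set ℕ) = ∅ := by ext n; simp [hS]
        rw [this] at h
        exact (Ultrafilter.empty_notMem) h
      · intro h
        have : ({n | S ∈ U} : Set ℕ) = Set.univ := by ext n; simp [h]
        rw [this]; exact Filter.univ_mem
    have hA := Aux.fixed U f hfU
    have hB := Aux.fixed U g hgU
    have hdiag : {p : ℕ × ℕ | p.1 = p.2} ∈ tensor U U := by
      rw [← hF, Ultrafilter.mem_map]
      refine Filter.mem_of_superset (inter_mem hA hB) ?_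
      intro n ⟨h1, h2⟩
      simp only [Set.mem_preimage, Set.mem_setOf_eq]
      exact h1.trans h2.symm
    rw [mem_tensor] at hdiag
    have : {n | {m | (n, m) ∈ {p : ℕ × ℕ | p.1 = p.2}} ∈ U} = ∅ := by
      ext n
      simp only [Set.mem_setOf_eq, Set.mem_empty_iff_false, iff_false]
      intro hmem
      have hsing : ({m | n = m} : Set ℕ) = {n} := by ext m; simp [eq_comm]
      rw [hsing] at hmem
      obtain ⟨x, hx, hpure⟩ := Ultrafilter.eq_pure_of_finite_mem (Set.finite_singleton n) hmem
      rw [Set.mem_singleton_iff] at hx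
      exact hU x hpure
    rw [this] at hdiag
    exact (Ultrafilter.empty_notMem) hdiag
  exact ⟨main, fun ⟨φ, hφ⟩ => main ⟨φ, hφ⟩⟩
end

section
/- For A, B ⊆ ℕ, the following are equivalent: (1) for every finite interval I ⊂ ℕ there exists x with x + (A ∩ I) = B ∩ (x + I) (A is exactly embedded in B); (2) there exists an ultrafilter U on ℕ such that A = B - U. -/
/-- The leftward shift `A - n = {m | m + n ∈ A}`. -/
def lshift (A : Set ℕ) (n : ℕ) : Set ℕ := {m | m + n ∈ A}

/-- The ultrafilter-shift `A - U = {n | A - n ∈ U}`. -/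
def ushift (A : Set ℕ) (U : Ultrafilter ℕ) : Set ℕ := {n | lshift A n ∈ U}

theorem stmt_13 (A B : Set ℕ) :
    (∀ a b : ℕ, ∃ x : ℕ,
        (fun s => x + s) '' (A ∩ Set.Icc a b) = B ∩ ((fun s => x + s) '' Set.Icc a b)) ↔
      ∃ U : Ultrafilter ℕ, A = ushift B U := by
  constructor
  · intro h
    choose x hx using fun b => h 0 b
    have key : ∀ b n, n ≤ b → (n ∈ A ↔ x b + n ∈ B) := by
      intro b n hn
      constructor
      · intro hA
        have hmem : x b + n ∈ (fun s => x b + s) '' (A ∩ Set.Icc 0 b) :=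
          ⟨n, ⟨hA, Nat.zero_le n, hn⟩, rfl⟩
        rw [hx b] at hmem
        exact hmem.1
      · intro hB
        have hmem : x b + n ∈ B ∩ ((fun s => x b + s) '' Set.Icc 0 b) :=
          ⟨hB, ⟨n, ⟨Nat.zero_le n, hn⟩, rfl⟩⟩
        rw [← hx b] at hmem
        obtain ⟨m, hm, hme⟩ := hmem
        have hme' : x b + m = x b + n := hme
        have : m = n := by omega
        subst this; exact hm.1
    refine ⟨(Filter.hyperfilter ℕ).map (fun b => x b), ?_⟩
    ext n
    simp only [ushift, Set.mem_setOf_eq, Ultrafilter.mem_map]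
    constructor
    · intro hA
      have hsub : {b | n ≤ b} ⊆ (fun b => x b) ⁻¹' lshift B n := by
        intro b hb
        exact (key b n hb).1 hA
      refine Filter.mem_of_superset ?_ hsub
      apply Filter.mem_hyperfilter_of_finite_compl
      have : {b : ℕ | n ≤ b}ᶜ ⊆ Set.Iio n := by
        intro b hb
        simpa using hb
      exact Set.Finite.subset (Set.finite_Iio n) this
    · intro hU
      by_contra hA
      have hsub : (fun b => x b) ⁻¹' lshift B n ⊆ Set.Iio n := by
        intro b hb
        by_contra hbn
        simp only [Set.mem_Iio, not_lt] at hbn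
        exact hA ((key b n hbn).2 hb)
      exact Filter.notMem_hyperfilter_of_finite
        (Set.Finite.subset (Set.finite_Iio n) hsub) hU
  · rintro ⟨U, rfl⟩
    intro a b
    set A := ushift B U with hA
    have hS : ∀ n : ℕ, {y : ℕ | n ∈ A ↔ y + n ∈ B} ∈ U := by
      intro n
      by_cases hn : n ∈ A
      · have hB : lshift B n ∈ U := hn
        refine Filter.mem_of_superset hB ?_
        intro y hy
        simp only [Set.mem_setOf_eq]
        exact ⟨fun _ => hy, fun _ => hn⟩
      · have hB : (lshift B n)ᶜ ∈ U := Ultrafilter.compl_mem_iff_notMem.2 hn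
        refine Filter.mem_of_superset hB ?_
        intro y hy
        simp only [Set.mem_setOf_eq]
        exact ⟨fun h => absurd h hn, fun h => absurd h hy⟩
    have hmem : (⋂ n ∈ Finset.Icc a b, {y : ℕ | n ∈ A ↔ y + n ∈ B}) ∈ U :=
      (Filter.biInter_finset_mem (Finset.Icc a b)).2 fun n _ => hS n
    obtain ⟨x, hxmem⟩ := Filter.nonempty_of_mem hmem
    refine ⟨x, ?_⟩
    have hx : ∀ n, a ≤ n → n ≤ b → (n ∈ A ↔ x + n ∈ B) := by
      intro n h1 h2
      have := Set.mem_iInter₂.mp hxmem n (Finset.mem_Icc.mpr ⟨h1, h2⟩)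
      simpa using this
    ext y
    constructor
    · rintro ⟨n, ⟨hnA, hn1, hn2⟩, rfl⟩
      exact ⟨(hx n hn1 hn2).1 hnA, n, ⟨hn1, hn2⟩, rfl⟩
    · rintro ⟨hyB, n, ⟨hn1, hn2⟩, rfl⟩
      exact ⟨n, ⟨(hx n hn1 hn2).2 hyB, hn1, hn2⟩, rfl⟩
end

section
/- If A, B ⊆ ℕ and A is exactly embedded in B (for every finite interval I there exists x with x + (A ∩ I) = B ∩ (x + I)), then the Banach (upper uniform) density of A is at most the Banach density of B. In particular, BD(A - U) ≤ BD(A) for every ultrafilter U. -/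
/-- The maximal number of elements of `A` in an interval of length `n`. -/
noncomputable def maxCount (A : Set ℕ) (n : ℕ) : ℕ :=
  ⨆ k, (A ∩ Set.Icc (k + 1) (k + n)).ncard

/-- The Banach (upper uniform) density of `A ⊆ ℕ`. -/
noncomputable def banachDensity (A : Set ℕ) : ℝ :=
  ⨅ n : ℕ, (maxCount A (n + 1) : ℝ) / (n + 1)

lemma ncard_inter_Icc_le (B : Set ℕ) (n j : ℕ) :
    (B ∩ Set.Icc (j + 1) (j + n)).ncard ≤ n := by
  calc (B ∩ Set.Icc (j + 1) (j + n)).ncard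
      ≤ (Set.Icc (j + 1) (j + n)).ncard :=
        Set.ncard_le_ncard Set.inter_subset_right (Set.finite_Icc _ _)
    _ ≤ n := by rw [← Finset.coe_Icc, Set.ncard_coe_finset, Nat.card_Icc]; omega

lemma ncard_le_maxCount (B : Set ℕ) (n k : ℕ) :
    (B ∩ Set.Icc (k + 1) (k + n)).ncard ≤ maxCount B n := by
  apply le_ciSup (f := fun k => (B ∩ Set.Icc (k + 1) (k + n)).ncard)
  exact ⟨n, by rintro _ ⟨j, rfl⟩; exact ncard_inter_Icc_le B n j⟩

lemma banachDensity_mono {A B : Set ℕ} (h : ∀ n, maxCount A n ≤ maxCount B n) :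
    banachDensity A ≤ banachDensity B := by
  apply ciInf_mono
  · exact ⟨0, by rintro _ ⟨j, rfl⟩; positivity⟩
  · intro n
    gcongr
    exact_mod_cast h (n + 1)

theorem stmt_14 (A B : Set ℕ)
    (h : ∀ a b : ℕ, ∃ x : ℕ,
        (fun s => x + s) '' (A ∩ Set.Icc a b) = B ∩ ((fun s => x + s) '' Set.Icc a b)) :
    banachDensity A ≤ banachDensity B ∧
    ∀ U : Ultrafilter ℕ, banachDensity (ushift A U) ≤ banachDensity A := by
  constructor
  · apply banachDensity_mono
    intro n
    apply ciSup_le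
    intro k
    obtain ⟨x, hx⟩ := h (k + 1) (k + n)
    have e1 : x + (k + 1) = (x + k) + 1 := by omega
    have e2 : x + (k + n) = (x + k) + n := by omega
    calc (A ∩ Set.Icc (k + 1) (k + n)).ncard
        = ((fun s => x + s) '' (A ∩ Set.Icc (k + 1) (k + n))).ncard :=
          (Set.ncard_image_of_injective _ (add_right_injective x)).symm
      _ = (B ∩ Set.Icc ((x + k) + 1) ((x + k) + n)).ncard := by
          rw [hx, Set.image_const_add_Icc, e1, e2]
      _ ≤ maxCount B n := ncard_le_maxCount B n (x + k)
  · intro U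
    apply banachDensity_mono
    intro n
    apply ciSup_le
    intro k
    set S := ushift A U ∩ Set.Icc (k + 1) (k + n) with hS
    have hSfin : S.Finite := (Set.finite_Icc _ _).inter_of_right _
    have hmem : (⋂ m ∈ S, lshift A m) ∈ U :=
      (Filter.biInter_mem hSfin).mpr (fun m hm => hm.1)
    obtain ⟨t, ht⟩ := Filter.nonempty_of_mem hmem
    simp only [Set.mem_iInter] at ht
    have hsub : (fun m => m + t) '' S ⊆ A ∩ Set.Icc ((k + t) + 1) ((k + t) + n) := by
      rintro _ ⟨m, hm, rfl⟩
      refine ⟨by have := ht m hm; simpa [lshift, Nat.add_comm] using this, ?_⟩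
      have := hm.2
      simp only [Set.mem_Icc] at this ⊢
      omega
    calc S.ncard = ((fun m => m + t) '' S).ncard :=
          (Set.ncard_image_of_injective _ (add_left_injective t)).symm
      _ ≤ (A ∩ Set.Icc ((k + t) + 1) ((k + t) + n)).ncard :=
          Set.ncard_le_ncard hsub ((Set.finite_Icc _ _).inter_of_right _)
      _ ≤ maxCount A n := ncard_le_maxCount A n (k + t)
end

section
/- For every A ⊆ ℕ there exists an ultrafilter U on ℕ such that the Schnirelmann density of the ultrafilter-shift A - U equals the Banach density of A: σ(A - U) = BD(A). -/
/-- The Schnirelmann density of `S ⊆ ℕ`. -/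
noncomputable def schnirelmannDensity' (S : Set ℕ) : ℝ :=
  ⨅ n : ℕ, ((S ∩ Set.Icc 1 (n + 1)).ncard : ℝ) / (n + 1)

open scoped Classical

noncomputable def cnt (A : Set ℕ) (a n : ℕ) : ℕ :=
  ((Finset.Icc (a + 1) (a + n)).filter (· ∈ A)).card

lemma ncard_eq_cnt (A : Set ℕ) (a n : ℕ) :
    (A ∩ Set.Icc (a + 1) (a + n)).ncard = cnt A a n := by
  rw [cnt, ← Set.ncard_coe_finset]
  congr 1
  ext x
  simp only [Set.mem_inter_iff, Set.mem_Icc, Finset.coe_filter, Finset.mem_Icc, Set.mem_setOf_eq]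
  tauto

lemma cnt_le (A : Set ℕ) (a n : ℕ) : cnt A a n ≤ n := by
  calc cnt A a n ≤ (Finset.Icc (a+1) (a+n)).card := Finset.card_filter_le _ _
  _ = n := by rw [Nat.card_Icc]; omega

lemma cnt_add (A : Set ℕ) (a n k : ℕ) (h : n ≤ k) :
    cnt A a k = cnt A a n + cnt A (a + n) (k - n) := by
  have hIcc : Finset.Icc (a+1) (a+k)
      = Finset.Icc (a+1) (a+n) ∪ Finset.Icc (a+n+1) (a+n+(k-n)) := by
    ext x; simp only [Finset.mem_union, Finset.mem_Icc]; omega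
  have hd : Disjoint (Finset.Icc (a+1) (a+n)) (Finset.Icc (a+n+1) (a+n+(k-n))) := by
    rw [Finset.disjoint_left]
    intro x hx hy
    simp only [Finset.mem_Icc] at hx hy
    omega
  rw [cnt, cnt, cnt, hIcc, Finset.filter_union,
    Finset.card_union_of_disjoint (Finset.disjoint_filter_filter hd)]

lemma cnt_le_maxCount (A : Set ℕ) (a n : ℕ) : cnt A a n ≤ maxCount A n := by
  rw [← ncard_eq_cnt]
  exact le_ciSup (f := fun k => (A ∩ Set.Icc (k + 1) (k + n)).ncard)
    ⟨n, by rintro x ⟨k, rfl⟩; simpa [ncard_eq_cnt] using cnt_le A k n⟩ a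

lemma exists_maxCount (A : Set ℕ) (n : ℕ) : ∃ a, cnt A a n = maxCount A n := by
  have h : maxCount A n ∈ Set.range (fun k => (A ∩ Set.Icc (k + 1) (k + n)).ncard) := by
    apply Nat.sSup_mem ⟨_, Set.mem_range_self 0⟩
    exact ⟨n, by rintro x ⟨k, rfl⟩; simpa [ncard_eq_cnt] using cnt_le A k n⟩
  obtain ⟨a, ha⟩ := h
  exact ⟨a, by rw [← ncard_eq_cnt]; exact ha⟩

lemma bd_nonneg (A : Set ℕ) : 0 ≤ banachDensity A := by
  apply le_ciInf
  intro n
  positivity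

lemma bd_bddBelow (A : Set ℕ) :
    BddBelow (Set.range fun n : ℕ => (maxCount A (n + 1) : ℝ) / (n + 1)) := by
  refine ⟨0, ?_⟩
  rintro x ⟨n, rfl⟩
  positivity

lemma mul_bd_le_maxCount (A : Set ℕ) (n : ℕ) (hn : 1 ≤ n) :
    (n : ℝ) * banachDensity A ≤ maxCount A n := by
  obtain ⟨m, rfl⟩ := Nat.exists_eq_add_of_le' hn
  have h := ciInf_le (bd_bddBelow A) m
  rw [banachDensity]
  have hpos : (0:ℝ) < (m:ℝ) + 1 := by positivity
  have := mul_le_mul_of_nonneg_left h (le_of_lt hpos)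
  push_cast
  calc ((m:ℝ) + 1) * ⨅ n : ℕ, (maxCount A (n + 1) : ℝ) / (n + 1)
      ≤ ((m:ℝ)+1) * ((maxCount A (m + 1) : ℝ) / ((m:ℝ)+1)) := this
    _ = (maxCount A (m + 1) : ℝ) := by field_simp

lemma exists_good (A : Set ℕ) (N : ℕ) :
    ∃ m, ∀ n, 1 ≤ n → n ≤ N → (n : ℝ) * banachDensity A ≤ cnt A m n := by
  rcases Nat.eq_zero_or_pos N with hN | hN
  · exact ⟨0, fun n h1 h2 => by omega⟩
  by_contra hcon
  push_neg at hcon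
  set d := banachDensity A with hd
  have hd0 : 0 ≤ d := bd_nonneg A
  have hne : (Finset.Icc 1 N).Nonempty := ⟨1, by simp only [Finset.mem_Icc]; omega⟩
  set δ : ℝ := (Finset.Icc 1 N).inf' hne (fun n => (n:ℝ)*d + 1 - ⌈(n:ℝ)*d⌉) with hδ
  have hδpos : 0 < δ := by
    rw [hδ, Finset.lt_inf'_iff]
    intro b _
    have := Int.ceil_lt_add_one ((b:ℝ)*d)
    linarith
  have hbad : ∀ m, ∃ n, 1 ≤ n ∧ n ≤ N ∧ (cnt A m n : ℝ) ≤ (n:ℝ)*d - δ := by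
    intro m
    obtain ⟨n, h1, h2, h3⟩ := hcon m
    refine ⟨n, h1, h2, ?_⟩
    have hc : (cnt A m n : ℤ) < ⌈(n:ℝ)*d⌉ := by
      rw [Int.lt_ceil]; exact_mod_cast h3
    have hc' : ((cnt A m n : ℤ) : ℝ) ≤ (⌈(n:ℝ)*d⌉ : ℝ) - 1 := by
      have : (cnt A m n : ℤ) ≤ ⌈(n:ℝ)*d⌉ - 1 := by omega
      exact_mod_cast this
    have hδle : δ ≤ (n:ℝ)*d + 1 - ⌈(n:ℝ)*d⌉ :=
      Finset.inf'_le _ (by simp [Finset.mem_Icc]; omega)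
    push_cast at hc' ⊢
    linarith
  have key : ∀ k, ∀ a, (cnt A a k : ℝ) ≤ (k:ℝ)*d + N - δ * (k / N : ℕ) := by
    intro k
    induction k using Nat.strong_induction_on with
    | _ k ih =>
      intro a
      rcases lt_or_ge k N with hk | hk
      · have h0 : k / N = 0 := Nat.div_eq_of_lt hk
        rw [h0]
        have h1 : (cnt A a k : ℝ) ≤ k := by exact_mod_cast cnt_le A a k
        have h2 : (k:ℝ) ≤ N := by exact_mod_cast le_of_lt hk
        push_cast
        nlinarith
      · obtain ⟨n, h1, h2, h3⟩ := hbad a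
        have hnk : n ≤ k := le_trans h2 hk
        have hsplit := cnt_add A a n k hnk
        have ih2 := ih (k - n) (by omega) (a + n)
        have hfl : k / N ≤ ((k - n)) / N + 1 := by
          have hle : k ≤ (k - n) + N := by omega
          calc k / N ≤ ((k-n) + N) / N := Nat.div_le_div_right hle
            _ = (k-n)/N + 1 := Nat.add_div_right _ hN
        have hflR : (↑(k / N) : ℝ) ≤ (↑((k-n)/N) : ℝ) + 1 := by exact_mod_cast hfl
        have hflδ : δ * (↑(k / N) : ℝ) ≤ δ * ((↑((k-n)/N) : ℝ) + 1) :=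
          mul_le_mul_of_nonneg_left hflR (le_of_lt hδpos)
        have hcast : ((k - n : ℕ) : ℝ) = (k:ℝ) - n := by
          push_cast [hnk]; ring
        rw [hsplit]
        rw [hcast] at ih2
        push_cast
        linarith
  set M := ⌈(N:ℝ)/δ⌉₊ + 1 with hM
  set k := N * (M + 1) with hk
  obtain ⟨a, ha⟩ := exists_maxCount A k
  have hk1 : 1 ≤ k := by
    have : 1 ≤ M + 1 := by omega
    calc 1 = 1 * 1 := by ring
      _ ≤ N * (M + 1) := Nat.mul_le_mul hN this
  have h1 : (k:ℝ) * d ≤ maxCount A k := mul_bd_le_maxCount A k hk1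
  have h2 := key k a
  rw [ha] at h2
  have hdiv : k / N = M + 1 := by
    rw [hk, Nat.mul_div_cancel_left _ hN]
  rw [hdiv] at h2
  have hMge : (N:ℝ)/δ ≤ (M:ℝ) := by
    have := Nat.le_ceil ((N:ℝ)/δ)
    have h' : (⌈(N:ℝ)/δ⌉₊ : ℝ) ≤ M := by exact_mod_cast Nat.le_succ _
    linarith
  have hNδ : (N:ℝ) ≤ δ * M := by
    rw [div_le_iff₀ hδpos] at hMge
    linarith
  push_cast at h2
  have hMc : ((M:ℕ):ℝ) = (⌈(N:ℝ)/δ⌉₊ : ℝ) + 1 := by rw [hM]; push_cast; ring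
  nlinarith [hNδ, hδpos, h1, h2]

lemma ncard_inter_Icc (S : Set ℕ) (a b : ℕ) :
    (S ∩ Set.Icc a b).ncard = ((Finset.Icc a b).filter (· ∈ S)).card := by
  rw [← Set.ncard_coe_finset]
  congr 1
  ext x
  simp only [Set.mem_inter_iff, Set.mem_Icc, Finset.coe_filter, Finset.mem_Icc, Set.mem_setOf_eq]
  tauto

def Egood (A : Set ℕ) (N : ℕ) : Set ℕ :=
  {m | ∀ n, 1 ≤ n → n ≤ N → (n : ℝ) * banachDensity A ≤ cnt A m n}

lemma Egood_antitone (A : Set ℕ) : Antitone (Egood A) := by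
  intro i j hij m hm n h1 h2
  exact hm n h1 (h2.trans hij)

lemma ushift_ncard (A : Set ℕ) (U : Ultrafilter ℕ) (n : ℕ) (T : Set ℕ) (hT : T ∈ U) :
    ∃ m ∈ T, ((ushift A U) ∩ Set.Icc 1 n).ncard = cnt A m n := by
  set W : Set ℕ := T ∩ ⋂ j ∈ Finset.Icc 1 n,
    (if lshift A j ∈ U then lshift A j else (lshift A j)ᶜ) with hW
  have hWU : W ∈ U := by
    apply Filter.inter_mem hT
    rw [Filter.biInter_finset_mem]
    intro j _
    split_ifs with h
    · exact h
    · exact Ultrafilter.compl_mem_iff_notMem.mpr h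
  obtain ⟨m, hm⟩ := U.nonempty_of_mem hWU
  refine ⟨m, hm.1, ?_⟩
  have hiff : ∀ j ∈ Finset.Icc 1 n, (j ∈ ushift A U ↔ m + j ∈ A) := by
    intro j hj
    have hm2 : m ∈ (if lshift A j ∈ U then lshift A j else (lshift A j)ᶜ) := by
      have := hm.2
      rw [Set.mem_iInter₂] at this
      exact this j hj
    by_cases h : lshift A j ∈ U
    · rw [if_pos h] at hm2
      simp only [ushift, Set.mem_setOf_eq]
      exact ⟨fun _ => hm2, fun _ => h⟩
    · rw [if_neg h] at hm2
      simp only [ushift, Set.mem_setOf_eq]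
      exact ⟨fun hx => absurd hx h, fun hx => absurd hx hm2⟩
  rw [ncard_inter_Icc, cnt]
  apply Finset.card_bij (fun j _ => m + j)
  · intro j hj
    simp only [Finset.mem_filter, Finset.mem_Icc] at hj ⊢
    obtain ⟨hj1, hj2⟩ := hj
    refine ⟨⟨by omega, by omega⟩, ?_⟩
    exact (hiff j (by simp only [Finset.mem_Icc]; omega)).mp hj2
  · intro j1 h1 j2 h2 heq
    omega
  · intro b hb
    simp only [Finset.mem_filter, Finset.mem_Icc] at hb
    obtain ⟨⟨hb1, hb2⟩, hb3⟩ := hb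
    refine ⟨b - m, ?_, by omega⟩
    simp only [Finset.mem_filter, Finset.mem_Icc]
    refine ⟨⟨by omega, by omega⟩, ?_⟩
    apply (hiff (b - m) (by simp only [Finset.mem_Icc]; omega)).mpr
    have : m + (b - m) = b := by omega
    rw [this]; exact hb3

theorem stmt_15 (A : Set ℕ) :
    ∃ U : Ultrafilter ℕ, schnirelmannDensity' (ushift A U) = banachDensity A := by
  set d := banachDensity A with hd
  have hdir : Directed (· ≥ ·) (fun N => Filter.principal (Egood A N)) := by
    intro i j
    exact ⟨max i j, Filter.principal_mono.mpr (Egood_antitone A (le_max_left i j)),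
      Filter.principal_mono.mpr (Egood_antitone A (le_max_right i j))⟩
  set F : Filter ℕ := ⨅ N, Filter.principal (Egood A N) with hF
  have hFne : F.NeBot := Filter.iInf_neBot_of_directed hdir (fun N =>
    Filter.principal_neBot_iff.mpr (exists_good A N))
  set U := Ultrafilter.of F with hU
  have hmem : ∀ N, Egood A N ∈ U := fun N =>
    Ultrafilter.of_le F (Filter.mem_iInf_of_mem N (Filter.mem_principal_self _))
  refine ⟨U, ?_⟩
  have hterm : ∀ n : ℕ, ((n:ℝ)+1) * d ≤ ((ushift A ↑U ∩ Set.Icc 1 (n+1)).ncard : ℝ)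
      ∧ ((ushift A ↑U ∩ Set.Icc 1 (n+1)).ncard : ℝ) ≤ (maxCount A (n+1) : ℝ) := by
    intro n
    obtain ⟨m, hmE, hmc⟩ := ushift_ncard A U (n+1) (Egood A (n+1)) (hmem (n+1))
    rw [hmc]
    constructor
    · have h := hmE (n+1) (by omega) le_rfl
      push_cast at h ⊢
      linarith
    · exact_mod_cast cnt_le_maxCount A m (n+1)
  have hbdd : BddBelow (Set.range fun n : ℕ =>
      ((ushift A ↑U ∩ Set.Icc 1 (n + 1)).ncard : ℝ) / (n + 1)) := by
    refine ⟨0, ?_⟩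
    rintro x ⟨k, rfl⟩
    positivity
  apply le_antisymm
  · rw [hd, banachDensity]
    apply le_ciInf
    intro n
    have h1 : schnirelmannDensity' (ushift A ↑U)
        ≤ ((ushift A ↑U ∩ Set.Icc 1 (n+1)).ncard : ℝ)/((n:ℝ)+1) := by
      rw [schnirelmannDensity']
      exact ciInf_le hbdd n
    apply h1.trans
    exact (div_le_div_iff_of_pos_right (by positivity : (0:ℝ) < (n:ℝ)+1)).mpr (hterm n).2
  · rw [schnirelmannDensity']
    apply le_ciInf
    intro n
    rw [le_div_iff₀ (by positivity : (0:ℝ) < (n:ℝ)+1)]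
    rw [mul_comm]
    exact (hterm n).1
end

section
/- For every nonprincipal ultrafilter U on ℕ there exists a nonprincipal ultrafilter V on ℕ such that U ⊕ V ≠ V ⊕ U. Hence the center of the semigroup (βℕ, ⊕) contains only principal ultrafilters. -/
open Filter Set

/-- The pseudo-sum of two ultrafilters on ℕ:
`A ∈ U ⊕ V ↔ {n | A - n ∈ V} ∈ U`, where `A - n = {m | m + n ∈ A}`. -/
def psum (U V : Ultrafilter ℕ) : Ultrafilter ℕ :=
  U.bind (fun n => V.map (fun m => m + n))

theorem mem_psum' {U V : Ultrafilter ℕ} {A : Set ℕ} :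
    (A ∈ psum U V ↔ {n | (fun m => m + n) ⁻¹' A ∈ V} ∈ U) := by
  show A ∈ Filter.bind (U : Filter ℕ) (fun n => ((V.map (fun m => m + n)) : Filter ℕ)) ↔ _
  rw [Filter.mem_bind']
  simp only [Ultrafilter.mem_coe, Ultrafilter.mem_map]

theorem gap_aux (p : ℕ) (hp : p < 2) (L : ℕ) :
    ∃ x, L ≤ x ∧ ∀ m, x ≤ m → m ≤ x + L → Nat.sqrt m % 2 ≠ p := by
  set k := 2 * L + 1 - p with hk
  have hkk : k ≤ k * k := by
    rcases Nat.eq_zero_or_pos k with h | h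
    · simp [h]
    · calc k = k * 1 := (Nat.mul_one k).symm
        _ ≤ k * k := Nat.mul_le_mul_left k h
  have hLk : L ≤ k := by omega
  refine ⟨k * k, le_trans hLk hkk, fun m h1 h2 => ?_⟩
  have h3 : k ≤ Nat.sqrt m := Nat.le_sqrt.mpr h1
  have h4 : Nat.sqrt m < k + 1 := Nat.sqrt_lt.mpr (by nlinarith)
  have hs : Nat.sqrt m = k := by omega
  rw [hs]; omega

theorem stmt_16 (U : Ultrafilter ℕ) (hU : ∀ n, U ≠ pure n) :
    ∃ V : Ultrafilter ℕ, (∀ n, V ≠ pure n) ∧ psum U V ≠ psum V U := by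
  -- U extends cofinite
  have hco : (U : Filter ℕ) ≤ cofinite := by
    rcases U.le_cofinite_or_eq_pure with h | ⟨a, ha⟩
    · exact h
    · exact absurd ha (hU a)
  -- choose parity p with C ∈ U
  obtain ⟨p, hp2, hpU⟩ : ∃ p, p < 2 ∧ {n | Nat.sqrt n % 2 = p} ∈ U := by
    by_cases h : {n | Nat.sqrt n % 2 = 0} ∈ U
    · exact ⟨0, by norm_num, h⟩
    · refine ⟨1, by norm_num, ?_⟩
      have h' := (Ultrafilter.compl_mem_iff_notMem).2 h
      have : {n | Nat.sqrt n % 2 = 0}ᶜ = {n | Nat.sqrt n % 2 = 1} := by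
        ext n; simp only [mem_compl_iff, mem_setOf_eq]; omega
      rwa [this] at h'
  -- gap function
  have hg := fun L => gap_aux p hp2 L
  set g : ℕ → ℕ := fun L => (hg L).choose with hgdef
  have hg1 : ∀ L, L ≤ g L := fun L => (hg L).choose_spec.1
  have hg2 : ∀ L m, g L ≤ m → m ≤ g L + L → Nat.sqrt m % 2 ≠ p :=
    fun L => (hg L).choose_spec.2
  -- the sparse sequence
  set a : ℕ → ℕ := fun n => Nat.rec 0 (fun j aj => aj + g (aj + j + 1)) n with hadef
  have ha0 : a 0 = 0 := rfl
  have haS : ∀ j, a (j + 1) = a j + g (a j + j + 1) := fun j => rfl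
  have hmono : ∀ j, a j + j < a (j + 1) := by
    intro j; have := hg1 (a j + j + 1); rw [haS j]; omega
  have hmono' : StrictMono a := strictMono_nat_of_lt_succ (fun j => by have := hmono j; omega)
  have hle : ∀ i k, i ≤ k → a i + i ≤ a k + k := by
    intro i k hik
    induction k with
    | zero =>
      have h0 : i = 0 := Nat.le_zero.mp hik
      subst h0; omega
    | succ k ih =>
      rcases eq_or_lt_of_le hik with h | h
      · subst h; omega
      · have := ih (Nat.lt_succ_iff.mp h); have := hmono k; omega
  have hmle : ∀ i k, i ≤ k → a i ≤ a k := fun i k h => hmono'.monotone h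
  -- window property
  have hwin : ∀ k j m, k < j → a j ≤ m + a k → m + a k ≤ a j + j → Nat.sqrt m % 2 ≠ p := by
    intro k j m hkj h1 h2
    obtain ⟨j', rfl⟩ : ∃ j', j = j' + 1 := ⟨j - 1, by omega⟩
    have hkj' : k ≤ j' := by omega
    have hak : a k ≤ a j' := hmle k j' hkj'
    have hx := haS j'
    exact hg2 (a j' + j' + 1) m (by omega) (by omega)
  -- the set A
  set A : Set ℕ := {n | ∃ k, a k ≤ n ∧ n ≤ a k + k} with hAdef
  -- the ultrafilter V
  set V : Ultrafilter ℕ := Ultrafilter.map a (Filter.hyperfilter ℕ) with hVdef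
  have hVmem : ∀ s : Set ℕ, s ∈ V ↔ a ⁻¹' s ∈ Filter.hyperfilter ℕ := fun s =>
    Ultrafilter.mem_map
  -- (1) every translate of A is in V
  have h1 : ∀ n, (fun m => m + n) ⁻¹' A ∈ V := by
    intro n
    rw [hVmem]
    apply Filter.mem_of_superset
      (Filter.mem_hyperfilter_of_finite_compl (s := {k | n ≤ k}) ?_)
    · intro k hk
      simp only [mem_setOf_eq] at hk
      simp only [mem_preimage, hAdef, mem_setOf_eq]
      exact ⟨k, by omega, by omega⟩
    · have : {k | n ≤ k}ᶜ ⊆ Set.Iic n := fun k hk => by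
        simp only [mem_compl_iff, mem_setOf_eq] at hk; simp only [mem_Iic]; omega
      exact (Set.finite_Iic n).subset this
  -- (2) no a k - translate of A is in U
  have h2 : ∀ k, (fun m => m + a k) ⁻¹' A ∉ U := by
    intro k
    rw [← Ultrafilter.compl_mem_iff_notMem]
    apply Filter.mem_of_superset
      (Filter.inter_mem hpU (hco (by
        rw [Filter.mem_cofinite]
        have : {m | k < m}ᶜ ⊆ Set.Iic k := fun m hm => by
          simp only [mem_compl_iff, mem_setOf_eq] at hm; simp only [mem_Iic]; omega
        exact (Set.finite_Iic k).subset this)))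
    rintro m ⟨hmC, hmk⟩
    simp only [mem_setOf_eq] at hmC hmk
    intro hmem
    simp only [mem_preimage, hAdef, mem_setOf_eq] at hmem
    obtain ⟨j, hj1, hj2⟩ := hmem
    rcases le_or_gt j k with h | h
    · have := hle j k h; omega
    · exact hwin k j m h hj1 hj2 hmC
  -- V is nonprincipal
  refine ⟨V, ?_, ?_⟩
  · intro n hVn
    have hn : {n} ∈ V := by rw [hVn]; exact Ultrafilter.mem_pure.mpr rfl
    rw [hVmem] at hn
    refine Filter.notMem_hyperfilter_of_finite ?_ hn
    exact (Set.finite_singleton n).preimage (hmono'.injective.injOn)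
  · intro heq
    have hin : A ∈ psum U V := by
      rw [mem_psum']
      have : {n | (fun m => m + n) ⁻¹' A ∈ V} = univ := eq_univ_of_forall h1
      rw [this]; exact Filter.univ_mem
    have hout : A ∉ psum V U := by
      rw [mem_psum', ← Ultrafilter.compl_mem_iff_notMem] at *
      rw [hVmem]
      apply Filter.mem_of_superset (Filter.univ_mem)
      intro k _
      simp only [mem_preimage, mem_compl_iff, mem_setOf_eq]
      exact h2 k
    rw [heq] at hin
    exact hout hin
end

section
/- There is no ultrafilter U on ℕ satisfying U ⋆ U = U, where A ∈ U ⋆ V ↔ {n | A + n ∈ V} ∈ U and A + n = {a + n | a ∈ A}. -/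
open Filter

private lemma three_prime : Nat.Prime 3 := by norm_num

/-- If `b` is not divisible by 3, the 3-adic valuation of `3^k * b` is `k`
and the cofactor is `b`. -/
private lemma val_cofactor (k b : ℕ) (hb : ¬ 3 ∣ b) :
    (3 ^ k * b).factorization 3 = k ∧ (3 ^ k * b) / 3 ^ ((3 ^ k * b).factorization 3) = b := by
  have hb0 : b ≠ 0 := by rintro rfl; exact hb (dvd_zero 3)
  have hf : (3 ^ k * b).factorization 3 = k := by
    rw [Nat.factorization_mul (by positivity) hb0, Nat.Prime.factorization_pow three_prime]
    simp [Nat.factorization_eq_zero_of_not_dvd hb]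
  refine ⟨hf, ?_⟩
  rw [hf, Nat.mul_div_cancel_left _ (by positivity)]

theorem stmt_19 :
    ¬ ∃ U : Ultrafilter ℕ, (∀ k, U ≠ pure k) ∧
      ∀ A : Set ℕ, A ∈ U ↔ {n | ((fun a => a + n) '' A) ∈ U} ∈ U := by
  rintro ⟨U, hp, hU⟩
  set f : ℕ → ℕ := fun n => n.factorization 3 with hf
  set g : ℕ → ℕ := fun n => n / 3 ^ (n.factorization 3) with hg
  -- basic facts about f and g
  have hsplit : ∀ a : ℕ, a ≠ 0 → 3 ^ f a * g a = a ∧ ¬ 3 ∣ g a := fun a ha =>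
    ⟨Nat.ordProj_mul_ordCompl_eq_self a 3,
      Nat.not_dvd_ordCompl three_prime ha⟩
  -- the singleton {0} is not in U, so {m | m ≠ 0} ∈ U
  have hzero : {m : ℕ | m ≠ 0} ∈ U := by
    have : ¬ ({0} : Set ℕ) ∈ U := fun h => hp 0 (Ultrafilter.coe_injective
      (by rw [Ultrafilter.coe_pure]; exact U.neBot.eq_pure_iff.mpr h))
    have := (Ultrafilter.compl_mem_iff_notMem).mpr this
    simpa [Set.compl_singleton_eq] using this
  -- choose i ∈ {1, 2} with C_i ∈ U, where C_i = {a | a ≠ 0 ∧ g a % 3 = i}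
  have hg3 : ∀ a : ℕ, a ≠ 0 → g a % 3 = 1 ∨ g a % 3 = 2 := by
    intro a ha
    have h1 : ¬ 3 ∣ g a := (hsplit a ha).2
    have := Nat.mod_lt (g a) (show 0 < 3 by norm_num)
    omega
  obtain ⟨i, hi12, hCi⟩ :
      ∃ i, (i = 1 ∨ i = 2) ∧ {a : ℕ | a ≠ 0 ∧ g a % 3 = i} ∈ U := by
    by_cases h1 : {a : ℕ | a ≠ 0 ∧ g a % 3 = 1} ∈ U
    · exact ⟨1, Or.inl rfl, h1⟩
    · refine ⟨2, Or.inr rfl, ?_⟩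
      have hc := (Ultrafilter.compl_mem_iff_notMem).mpr h1
      have := Filter.inter_mem hc hzero
      refine Filter.mem_of_superset this ?_
      rintro a ⟨hac, ha0⟩
      rcases hg3 a ha0 with h | h
      · exact absurd ⟨ha0, h⟩ hac
      · exact ⟨ha0, h⟩
  -- case split on whether f is U-bounded
  by_cases hbd : ∃ k, {m : ℕ | m ≠ 0 ∧ f m = k} ∈ U
  · -- Case A: f = k on a set in U
    obtain ⟨k, hTk⟩ := hbd
    set A : Set ℕ := {a | a ≠ 0 ∧ g a % 3 = i} ∩ {m | m ≠ 0 ∧ f m = k} with hA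
    have hAU : A ∈ U := Filter.inter_mem hCi hTk
    have hD : {n | ((fun a => a + n) '' A) ∈ U} ∈ U := (hU A).mp hAU
    obtain ⟨n, hnA, hnD⟩ := Ultrafilter.nonempty_of_mem (Filter.inter_mem hAU hD)
    have himg : ((fun a => a + n) '' A) ∈ U := hnD
    obtain ⟨m, hmI, hmA⟩ := Ultrafilter.nonempty_of_mem (Filter.inter_mem himg hAU)
    obtain ⟨a, haA, ham⟩ := hmI
    -- now derive a contradiction
    obtain ⟨⟨ha0, hagi⟩, _, hafk⟩ := haA
    obtain ⟨⟨hn0, hngi⟩, _, hnfk⟩ := hnA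
    obtain ⟨⟨hm0, hmgi⟩, _, hmfk⟩ := hmA
    have hasp := hsplit a ha0
    have hnsp := hsplit n hn0
    have hmeq : m = 3 ^ k * (g a + g n) := by
      have h1 : 3 ^ k * g a = a := by rw [← hafk]; exact hasp.1
      have h2 : 3 ^ k * g n = n := by rw [← hnfk]; exact hnsp.1
      rw [mul_add, h1, h2, ← ham]
    have hnd : ¬ 3 ∣ (g a + g n) := by omega
    obtain ⟨hfm, hgm⟩ := val_cofactor k (g a + g n) hnd
    rw [← hmeq] at hfm hgm
    -- g m = g a + g n, so g m % 3 = 2i % 3 ≠ i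
    have : g m = g a + g n := hgm
    omega
  · -- Case B: for all k, {m | m ≠ 0 ∧ f m = k} ∉ U
    push_neg at hbd
    have hW : ∀ k, {m : ℕ | m ≠ 0 ∧ k < f m} ∈ U := by
      intro k
      induction k with
      | zero =>
        have hc := (Ultrafilter.compl_mem_iff_notMem).mpr (hbd 0)
        refine Filter.mem_of_superset (Filter.inter_mem hc hzero) ?_
        rintro m ⟨hmc, hm0⟩
        simp only [Set.mem_compl_iff, Set.mem_setOf_eq, not_and] at hmc
        exact ⟨hm0, Nat.pos_of_ne_zero (hmc hm0)⟩
      | succ k ih =>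
        have hc := (Ultrafilter.compl_mem_iff_notMem).mpr (hbd (k + 1))
        refine Filter.mem_of_superset (Filter.inter_mem hc ih) ?_
        rintro m ⟨hmc, hm0, hmk⟩
        simp only [Set.mem_compl_iff, Set.mem_setOf_eq, not_and] at hmc
        have := hmc hm0
        exact ⟨hm0, by omega⟩
    set A : Set ℕ := {a | a ≠ 0 ∧ g a % 3 = i} with hA
    have hD : {n | ((fun a => a + n) '' A) ∈ U} ∈ U := (hU A).mp hCi
    obtain ⟨n, hnA, hnD⟩ := Ultrafilter.nonempty_of_mem (Filter.inter_mem hCi hD)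
    have himg : ((fun a => a + n) '' A) ∈ U := hnD
    obtain ⟨m, hmI, hmW⟩ :=
      Ultrafilter.nonempty_of_mem (Filter.inter_mem himg (hW (f n)))
    obtain ⟨a, haA, ham⟩ := hmI
    obtain ⟨ha0, hagi⟩ := haA
    obtain ⟨hn0, hngi⟩ := hnA
    obtain ⟨hm0, hmf⟩ := hmW
    set k := f n with hk
    have hasp := hsplit a ha0
    have hnsp := hsplit n hn0
    have hmsp := hsplit m hm0
    -- 3^(k+1) ∣ m
    have hdm : 3 ^ (k + 1) ∣ m := by
      have : (3:ℕ) ^ (k + 1) ∣ 3 ^ (f m) := pow_dvd_pow 3 (by omega)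
      exact this.trans ⟨g m, hmsp.1.symm⟩
    have hdn : 3 ^ k ∣ n := ⟨g n, hnsp.1.symm⟩
    have hda : 3 ^ k ∣ a := by
      have hdm' : 3 ^ k ∣ m := (pow_dvd_pow 3 (by omega)).trans hdm
      have ham' : a + n = m := ham
      have : a = m - n := by omega
      rw [this]; exact Nat.dvd_sub hdm' hdn
    obtain ⟨b, hb⟩ := hda
    have hneq : n = 3 ^ k * g n := hnsp.1.symm
    have hmeq : m = 3 ^ k * (b + g n) := by
      have h' : m = a + n := ham.symm
      rw [mul_add, ← hb]
      linarith [hneq]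
    have h3bg : 3 ∣ (b + g n) := by
      have : (3:ℕ) ^ (k+1) ∣ 3 ^ k * (b + g n) := hmeq ▸ hdm
      rw [pow_succ] at this
      exact (Nat.mul_dvd_mul_iff_left (show 0 < 3^k by positivity)).mp this
    -- so b % 3 = 3 - i, but b = g a so g a % 3 = i : contradiction
    have hbnd : ¬ 3 ∣ b := by omega
    obtain ⟨hfa, hga⟩ := val_cofactor k b hbnd
    rw [← hb] at hfa hga
    have : g a = b := hga
    omega
end
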